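/- arXiv:1512.08492 — 5 statements merged into one kernel-verified Lean document; each statement's English description precedes it below -/
import Mathlib

section
/- For p ≥ 3, the function φ(z) = ((1+z)/z²)·log(1+z) − 1/z, defined for z > 0, takes the value 1/p for exactly one z > 0. That is, the equation 1/p = ((1+z)/z²)log(1+z) − 1/z has a unique positive solution. -/
open Real Set

private noncomputable def phiF : ℝ → ℝ := fun z => ((1 + z) / z ^ 2) * Real.log (1 + z) - 1 / z

private lemma lemA {z : ℝ} (hz : 0 < z) : z / (1 + z) < Real.log (1 + z) := by
  have h1 : (0:ℝ) < 1 + z := by linarith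
  have h2 : (1 + z)⁻¹ ≠ 1 := by
    intro h
    have : (1:ℝ) + z = 1 := by
      field_simp at h; linarith
    linarith
  have := Real.log_lt_sub_one_of_pos (x := (1 + z)⁻¹) (by positivity) h2
  rw [Real.log_inv] at this
  have : -((1 + z)⁻¹ - 1) < Real.log (1 + z) := by linarith
  have heq : -((1 + z)⁻¹ - 1) = z / (1 + z) := by field_simp; ring
  linarith [heq ▸ this]

private lemma hDeriv {z : ℝ} (hz : -1 < z) :
    HasDerivAt (fun z : ℝ => (z + 2) * Real.log (1 + z) - 2 * z)
      (Real.log (1 + z) + (z + 2) / (1 + z) - 2) z := by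
  have h1 : (0:ℝ) < 1 + z := by linarith
  have hlog : HasDerivAt (fun z : ℝ => Real.log (1 + z)) (1 / (1 + z)) z := by
    have := (Real.hasDerivAt_log h1.ne').comp z
      ((hasDerivAt_const z (1:ℝ)).add (hasDerivAt_id z))
    simpa [one_div, Function.comp_def] using this
  have h2 : HasDerivAt (fun z : ℝ => z + 2) 1 z := by
    simpa using (hasDerivAt_id z).add_const 2
  have := (h2.mul hlog).sub ((hasDerivAt_id z).const_mul 2)
  refine this.congr_deriv ?_
  ring

private lemma lemB {z : ℝ} (hz : 0 < z) : 2 * z < (z + 2) * Real.log (1 + z) := by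
  have key : StrictMonoOn (fun z : ℝ => (z + 2) * Real.log (1 + z) - 2 * z) (Ici 0) := by
    apply strictMonoOn_of_deriv_pos (convex_Ici 0)
    · intro x hx
      exact (hDeriv (by simp at hx; linarith)).continuousAt.continuousWithinAt
    · intro x hx
      rw [interior_Ici] at hx
      have hx0 : (0:ℝ) < x := hx
      rw [(hDeriv (by linarith)).deriv]
      have hA := lemA hx0
      have h1 : (0:ℝ) < 1 + x := by linarith
      have h2 : (x + 2) / (1 + x) = 2 - x / (1 + x) := by field_simp; ring
      linarith [hA, h2]
  have := key (self_mem_Ici) (le_of_lt hz : (0:ℝ) ≤ z) hz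
  simp at this
  linarith

private lemma phiDeriv {z : ℝ} (hz : 0 < z) :
    HasDerivAt phiF ((2 * z - (z + 2) * Real.log (1 + z)) / z ^ 3) z := by
  have h1 : (0:ℝ) < 1 + z := by linarith
  have hlog : HasDerivAt (fun z : ℝ => Real.log (1 + z)) (1 / (1 + z)) z := by
    have := (Real.hasDerivAt_log h1.ne').comp z
      ((hasDerivAt_const z (1:ℝ)).add (hasDerivAt_id z))
    simpa [one_div, Function.comp_def] using this
  have hnum : HasDerivAt (fun z : ℝ => 1 + z) 1 z := by
    simpa using (hasDerivAt_id z).const_add (1:ℝ)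
  have hden : HasDerivAt (fun z : ℝ => z ^ 2) (2 * z) z := by
    simpa using hasDerivAt_pow 2 z
  have hq : HasDerivAt (fun z : ℝ => (1 + z) / z ^ 2)
      ((1 * z ^ 2 - (1 + z) * (2 * z)) / (z ^ 2) ^ 2) z :=
    hnum.div hden (pow_ne_zero 2 hz.ne')
  have hinv : HasDerivAt (fun z : ℝ => 1 / z) (-(z ^ 2)⁻¹) z := by
    simpa [one_div] using hasDerivAt_inv hz.ne'
  have := (hq.mul hlog).sub hinv
  refine this.congr_deriv ?_
  field_simp
  ring

private lemma phiAnti : StrictAntiOn phiF (Ioi 0) := by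
  apply strictAntiOn_of_deriv_neg (convex_Ioi 0)
  · intro x hx
    exact (phiDeriv hx).continuousAt.continuousWithinAt
  · intro x hx
    rw [interior_Ioi] at hx
    have hx0 : (0:ℝ) < x := hx
    rw [(phiDeriv hx).deriv]
    have := lemB hx
    have h3 : (0:ℝ) < x ^ 3 := by positivity
    apply div_neg_of_neg_of_pos _ h3
    linarith

theorem stmt_1 (p : ℕ) (hp : 3 ≤ p) :
    ∃! z : ℝ, 0 < z ∧ (1 : ℝ) / p = ((1 + z) / z ^ 2) * Real.log (1 + z) - 1 / z := by
  have hP : (3:ℝ) ≤ (p:ℝ) := by exact_mod_cast hp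
  have hP0 : (0:ℝ) < p := by linarith
  set b : ℝ := 100 * (p:ℝ) ^ 2 with hb
  have hb1 : (1:ℝ) ≤ b := by nlinarith
  have hb0 : (0:ℝ) < b := by linarith
  -- f 1 > 1/3 ≥ 1/p
  have hf1 : 1 / (p:ℝ) < phiF 1 := by
    have hlog2 := Real.log_two_gt_d9
    have h13 : 1 / (p:ℝ) ≤ 1 / 3 := by
      apply one_div_le_one_div_of_le <;> linarith
    have : phiF 1 = 2 * Real.log 2 - 1 := by
      unfold phiF
      norm_num
    rw [this]
    linarith
  -- f b < 1/p
  have hfb : phiF b < 1 / (p:ℝ) := by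
    have h1b : (0:ℝ) < 1 + b := by linarith
    set s : ℝ := Real.sqrt (1 + b) with hs
    have hs0 : 0 < s := Real.sqrt_pos.mpr h1b
    have hs2 : s ^ 2 = 1 + b := Real.sq_sqrt h1b.le
    have hlogle : Real.log (1 + b) ≤ 2 * s := by
      have := Real.log_le_sub_one_of_pos hs0
      have hls : Real.log (1 + b) = 2 * Real.log s := by
        rw [← hs2, Real.log_pow]; push_cast; ring
      linarith
    have hsle : s ≤ 11 * (p:ℝ) := by
      rw [hs]
      have : (1:ℝ) + b ≤ (11 * (p:ℝ)) ^ 2 := by nlinarith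
      calc Real.sqrt (1 + b) ≤ Real.sqrt ((11 * (p:ℝ)) ^ 2) := Real.sqrt_le_sqrt this
        _ = 11 * (p:ℝ) := Real.sqrt_sq (by positivity)
    have hlog0 : 0 ≤ Real.log (1 + b) := Real.log_nonneg (by linarith)
    have key : ((1 + b) / b ^ 2) * Real.log (1 + b) ≤ (2 / b) * (22 * (p:ℝ)) := by
      have h1 : (1:ℝ) + b ≤ 2 * b := by linarith
      have h2 : Real.log (1 + b) ≤ 22 * (p:ℝ) := by linarith
      have hb2 : (0:ℝ) < b ^ 2 := by positivity
      calc ((1 + b) / b ^ 2) * Real.log (1 + b)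
          ≤ ((2 * b) / b ^ 2) * Real.log (1 + b) := by
            apply mul_le_mul_of_nonneg_right _ hlog0
            gcongr
        _ = (2 / b) * Real.log (1 + b) := by field_simp
        _ ≤ (2 / b) * (22 * (p:ℝ)) := by
            apply mul_le_mul_of_nonneg_left h2 (by positivity)
    have hfinal : (2 / b) * (22 * (p:ℝ)) < 1 / (p:ℝ) := by
      rw [hb]
      rw [div_mul_eq_mul_div, div_lt_div_iff₀ (by positivity) hP0]
      nlinarith
    have : phiF b < ((1 + b) / b ^ 2) * Real.log (1 + b) := by
      have : 0 < 1 / b := by positivity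
      simp only [phiF]
      linarith
    linarith
  -- continuity on Icc 1 b
  have hcont : ContinuousOn phiF (Icc 1 b) := by
    intro x hx
    exact (phiDeriv (by have := hx.1; linarith)).continuousAt.continuousWithinAt
  -- IVT
  have hmem : 1 / (p:ℝ) ∈ Icc (phiF b) (phiF 1) := ⟨hfb.le, hf1.le⟩
  obtain ⟨z, hzmem, hzeq⟩ := intermediate_value_Icc' hb1 hcont hmem
  refine ⟨z, ⟨by linarith [hzmem.1], ?_⟩, ?_⟩
  · simpa [phiF] using hzeq.symm
  · rintro y ⟨hy0, hyeq⟩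
    have hz0 : (0:ℝ) < z := by linarith [hzmem.1]
    have hyf : phiF y = 1 / (p:ℝ) := by unfold phiF; linarith [hyeq]
    exact phiAnti.injOn (mem_Ioi.mpr hy0) (mem_Ioi.mpr hz0) (by rw [hyf, hzeq])
end

section
/- Fix p ≥ 3 and z > 0 satisfying 1/p = ((1+z)/z²)log(1+z) − 1/z, and set δ = z/(1+z). Define g(u) = (1−u^p)/p + (1−u)/z − ((1+z)/z²)·log(z(1−u)+1) for u ∈ [0,1]. Then g(0) = g(1) = 0 and g(u) > 0 for all u ∈ (0,1). -/
theorem stmt_3 (p : ℕ) (hp : 3 ≤ p) (z : ℝ) (hz : 0 < z)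
    (hzeq : (1 : ℝ) / p = ((1 + z) / z ^ 2) * Real.log (1 + z) - 1 / z)
    (δ : ℝ) (hδ : δ = z / (1 + z))
    (g : ℝ → ℝ)
    (hg : ∀ u, g u = (1 - u ^ p) / p + (1 - u) / z
      - ((1 + z) / z ^ 2) * Real.log (z * (1 - u) + 1)) :
    g 0 = 0 ∧ g 1 = 0 ∧ ∀ u ∈ Set.Ioo (0:ℝ) 1, 0 < g u := by
  obtain ⟨k, rfl⟩ : ∃ k, p = k + 3 := ⟨p - 3, by omega⟩
  have hgf : g = fun u => (1 - u ^ (k+3)) / (↑(k+3)) + (1 - u) / z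
      - ((1 + z) / z ^ 2) * Real.log (z * (1 - u) + 1) := funext hg
  subst hgf
  set G : ℝ → ℝ := fun u => (1 - u ^ (k+3)) / (↑(k+3)) + (1 - u) / z
      - ((1 + z) / z ^ 2) * Real.log (z * (1 - u) + 1) with hGdef
  have hzne : z ≠ 0 := ne_of_gt hz
  have hpne : ((k:ℝ)+3) ≠ 0 := by positivity
  -- G 0 = 0
  have hG0 : G 0 = 0 := by
    have h1 : z * (1 - 0) + 1 = 1 + z := by ring
    have h2 : ((0:ℝ)) ^ (k+3) = 0 := by simp
    rw [hGdef]
    simp only [h1, h2]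
    push_cast at hzeq ⊢
    rw [one_div, one_div] at hzeq
    norm_num
    linarith [hzeq]
  have hG1 : G 1 = 0 := by
    have h1 : z * (1 - 1) + 1 = 1 := by ring
    rw [hGdef]
    simp only [h1, Real.log_one, one_pow]
    ring
  refine ⟨hG0, hG1, ?_⟩
  intro u hu
  obtain ⟨hu0, hu1⟩ := hu
  -- positivity of D
  have hD : ∀ x : ℝ, x ≤ 1 → 0 < z * (1 - x) + 1 := by
    intro x hx; nlinarith
  -- derivative of G
  have hderiv : ∀ x : ℝ, x ≤ 1 →
      HasDerivAt G (x / (z * (1 - x) + 1) - x ^ (k+2)) x := by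
    intro x hx
    have hDx := hD x hx
    have h1 : HasDerivAt (fun u : ℝ => (1 - u ^ (k+3)) / (↑(k+3) : ℝ))
        (-((↑(k+3) : ℝ) * x ^ (k+2)) / (↑(k+3) : ℝ)) x := by
      have := ((hasDerivAt_pow (k+3) x).const_sub 1).div_const ((↑(k+3) : ℝ))
      simpa using this
    have h2 : HasDerivAt (fun u : ℝ => (1 - u) / z) (-1 / z) x := by
      simpa using ((hasDerivAt_id x).const_sub 1).div_const z
    have h3i : HasDerivAt (fun u : ℝ => z * (1 - u) + 1) (-z) x := by
      simpa using (((hasDerivAt_id x).const_sub 1).const_mul z).add_const 1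
    have h3 : HasDerivAt (fun u : ℝ => ((1 + z) / z ^ 2) * Real.log (z * (1 - u) + 1))
        (((1 + z) / z ^ 2) * (-z / (z * (1 - x) + 1))) x :=
      (h3i.log hDx.ne').const_mul _
    have htot := (h1.add h2).sub h3
    refine htot.congr_deriv ?_
    push_cast
    field_simp
    ring
  -- the function q
  set q : ℝ → ℝ := fun u => u ^ (k+1) * (z * (1 - u) + 1) with hqdef
  have hq1 : q 1 = 1 := by simp [hqdef]
  -- critical point of q
  set m : ℝ := ((k:ℝ)+1) * (1 + z) / (((k:ℝ)+2) * z) with hmdef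
  have hm0 : 0 < m := by positivity
  have hBpos : 0 < ((k:ℝ)+2) * z := by positivity
  -- derivative of q
  have hqd : ∀ x : ℝ, HasDerivAt q
      (x ^ k * (((k:ℝ)+1) * (1 + z) - ((k:ℝ)+2) * z * x)) x := by
    intro x
    have h1 : HasDerivAt (fun u : ℝ => u ^ (k+1)) ((↑(k+1) : ℝ) * x ^ k) x := by
      simpa using hasDerivAt_pow (k+1) x
    have h2 : HasDerivAt (fun u : ℝ => z * (1 - u) + 1) (-z) x := by
      simpa using (((hasDerivAt_id x).const_sub 1).const_mul z).add_const 1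
    have := h1.mul h2
    refine this.congr_deriv ?_
    push_cast
    ring
  have hqc : Continuous q :=
    (continuous_pow _).mul ((continuous_const.mul (continuous_const.sub
      continuous_id)).add continuous_const)
  have hqmono : StrictMonoOn q (Set.Icc 0 m) := by
    apply strictMonoOn_of_deriv_pos (convex_Icc _ _) hqc.continuousOn
    intro x hx
    rw [interior_Icc] at hx
    rw [(hqd x).deriv]
    have hx0 : 0 < x := hx.1
    have hxm : x < m := hx.2
    rw [hmdef, lt_div_iff₀ hBpos] at hxm
    have : 0 < ((k:ℝ)+1) * (1 + z) - ((k:ℝ)+2) * z * x := by nlinarith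
    exact mul_pos (pow_pos hx0 k) this
  have hqanti : StrictAntiOn q (Set.Icc m 1) := by
    apply strictAntiOn_of_deriv_neg (convex_Icc _ _) hqc.continuousOn
    intro x hx
    rw [interior_Icc] at hx
    rw [(hqd x).deriv]
    have hx0 : 0 < x := hm0.trans hx.1
    have hxm : m < x := hx.1
    rw [hmdef, div_lt_iff₀ hBpos] at hxm
    have : ((k:ℝ)+1) * (1 + z) - ((k:ℝ)+2) * z * x < 0 := by nlinarith
    exact mul_neg_of_pos_of_neg (pow_pos hx0 k) this
  -- continuity of G on [0,1]
  have hGc : ContinuousOn G (Set.Icc (0:ℝ) 1) := by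
    rw [hGdef]
    apply ContinuousOn.sub
    · exact (((continuous_const.sub (continuous_pow _)).div_const _).add
        ((continuous_const.sub continuous_id).div_const _)).continuousOn
    · apply ContinuousOn.mul continuousOn_const
      apply ContinuousOn.log
      · exact ((continuous_const.mul (continuous_const.sub continuous_id)).add
          continuous_const).continuousOn
      · intro x hx; exact (hD x hx.2).ne'
  -- sign lemmas for deriv G
  have hdpos : ∀ x ∈ Set.Ioo (0:ℝ) 1, q x < 1 → 0 < deriv G x := by
    intro x hx hqx
    rw [(hderiv x hx.2.le).deriv]
    have hDx := hD x hx.2.le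
    have hx0 : 0 < x := hx.1
    rw [sub_pos]
    calc x ^ (k+2) = x * (x ^ (k+1)) := by ring
    _ < x * (1 / (z * (1 - x) + 1)) := by
        apply mul_lt_mul_of_pos_left _ hx0
        rw [lt_div_iff₀ hDx]
        simpa only [hqdef] using hqx
    _ = x / (z * (1 - x) + 1) := by ring
  have hdneg : ∀ x ∈ Set.Ioo (0:ℝ) 1, 1 < q x → deriv G x < 0 := by
    intro x hx hqx
    rw [(hderiv x hx.2.le).deriv]
    have hDx := hD x hx.2.le
    have hx0 : 0 < x := hx.1
    rw [sub_neg, div_lt_iff₀ hDx]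
    calc x = x * 1 := by ring
    _ < x * q x := by exact mul_lt_mul_of_pos_left hqx hx0
    _ = x ^ (k+2) * (z * (1 - x) + 1) := by rw [hqdef]; ring
  -- main case split
  by_cases hcase : ∀ v ∈ Set.Ioc (0:ℝ) u, q v < 1
  · have hmono : StrictMonoOn G (Set.Icc 0 u) := by
      apply strictMonoOn_of_deriv_pos (convex_Icc _ _)
        (hGc.mono (Set.Icc_subset_Icc le_rfl hu1.le))
      intro x hx
      rw [interior_Icc] at hx
      exact hdpos x ⟨hx.1, hx.2.trans hu1⟩ (hcase x ⟨hx.1, hx.2.le⟩)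
    have := hmono (Set.left_mem_Icc.mpr hu0.le) (Set.right_mem_Icc.mpr hu0.le) hu0
    rw [hG0] at this
    exact this
  · push_neg at hcase
    obtain ⟨v, hv, hqv⟩ := hcase
    have hanti : StrictAntiOn G (Set.Icc u 1) := by
      apply strictAntiOn_of_deriv_neg (convex_Icc _ _)
        (hGc.mono (Set.Icc_subset_Icc hu0.le le_rfl))
      intro x hx
      rw [interior_Icc] at hx
      apply hdneg x ⟨hu0.trans hx.1, hx.2⟩
      have hvx : v < x := hv.2.trans_lt hx.1
      rcases le_or_gt x m with hxm | hmx
      · have := hqmono ⟨hv.1.le, hvx.le.trans hxm⟩ ⟨(hu0.trans hx.1).le, hxm⟩ hvx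
        linarith
      · have := hqanti ⟨hmx.le, hx.2.le⟩ ⟨(hmx.trans hx.2).le, le_rfl⟩ hx.2
        rw [hq1] at this
        exact this
    have := hanti (Set.left_mem_Icc.mpr hu1.le) (Set.right_mem_Icc.mpr hu1.le) hu1
    rw [hG1] at this
    exact this
end

section
/- Let ξ be a mixture function with ξ'(1) + h² < ξ''(1), and suppose s ↦ ξ''(s)^{−1/2} is concave on (0,1]. Let q₀ ∈ [0,1] be the unique solution of ξ'(q₀) + h² = q₀ξ''(q₀). Define L = ξ''(q₀)^{−1/2} and α(s) = 0 for s ∈ [0,q₀), α(s) = ξ'''(s)/(2ξ''(s)^{3/2}) for s ∈ [q₀,1). Then α is nondecreasing on [0,1), and ∫₀¹ dq/(L − ∫₀^q α(r)dr)² = ξ'(1) + h². -/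
open Set Filter MeasureTheory intervalIntegral

namespace Stmt8A

lemma coeff_le {c : ℕ → ℝ} {R : ℝ} (hR : 0 < R) (hs : Summable fun p => R ^ p * |c p|) :
    ∀ p, |c p| ≤ (∑' p, R ^ p * |c p|) / R ^ p := by
  intro p
  rw [le_div_iff₀ (pow_pos hR p), mul_comm]
  exact Summable.le_tsum hs p (fun j _ => mul_nonneg (pow_nonneg hR.le j) (abs_nonneg _))

lemma summable_D {c : ℕ → ℝ} {r R : ℝ} (h0 : 0 < r) (hrR : r < R)
    (hs : Summable fun p => R ^ p * |c p|) :
    Summable fun p => r ^ p * |(((p : ℕ) + 1 : ℕ) : ℝ) * c (p + 1)| := by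
  have hR : 0 < R := h0.trans hrR
  set B := ∑' p, R ^ p * |c p| with hB
  have hB0 : 0 ≤ B := tsum_nonneg fun p => mul_nonneg (pow_nonneg hR.le p) (abs_nonneg _)
  have hbd := coeff_le hR hs
  have hq1 : (r / R) < 1 := (div_lt_one hR).2 hrR
  have hq0 : 0 ≤ r / R := div_nonneg h0.le hR.le
  have hsum2 : Summable fun p : ℕ => ((p : ℝ) + 1) * (r / R) ^ p := by
    have h1 := summable_pow_mul_geometric_of_norm_lt_one (R := ℝ) 1
      (r := r / R) (by rwa [Real.norm_eq_abs, abs_of_nonneg hq0])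
    have h2 : Summable fun p : ℕ => (r / R) ^ p := summable_geometric_of_lt_one hq0 hq1
    refine (h1.add h2).congr fun p => ?_
    simp only [pow_one]; ring
  refine Summable.of_nonneg_of_le (fun p => by positivity) (fun p => ?_)
    ((hsum2.mul_left (B / R)))
  have h1 : |(((p : ℕ) + 1 : ℕ) : ℝ) * c (p + 1)| = ((p : ℝ) + 1) * |c (p + 1)| := by
    rw [abs_mul, Nat.abs_cast]; push_cast; ring
  rw [h1]
  have h2 : |c (p + 1)| ≤ B / R ^ (p + 1) := hbd (p + 1)
  have h3 : r ^ p * (((p : ℝ) + 1) * |c (p + 1)|) ≤ r ^ p * (((p : ℝ) + 1) * (B / R ^ (p + 1))) := by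
    gcongr
  refine h3.trans (le_of_eq ?_)
  rw [div_pow]
  ring

lemma summable_eval {c : ℕ → ℝ} {R : ℝ} (hs : Summable fun p => R ^ p * |c p|)
    {x : ℝ} (hx : |x| ≤ R) : Summable fun p => c p * x ^ p := by
  refine Summable.of_norm_bounded hs fun p => ?_
  rw [Real.norm_eq_abs, abs_mul, abs_pow, mul_comm]
  have h1 : |x| ^ p ≤ R ^ p := pow_le_pow_left₀ (abs_nonneg x) hx p
  exact mul_le_mul_of_nonneg_right h1 (abs_nonneg _)

lemma hasDerivAt_tsum_pow {c : ℕ → ℝ} {r R : ℝ} (h1 : 1 ≤ r) (hrR : r < R)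
    (hs : Summable fun p => R ^ p * |c p|) {x : ℝ} (hx : |x| < r) :
    HasDerivAt (fun s => ∑' p, c p * s ^ p)
      (∑' p, (((p : ℕ) + 1 : ℕ) : ℝ) * c (p + 1) * x ^ p) x := by
  have h0 : (0:ℝ) < r := lt_of_lt_of_le one_pos h1
  have hR : 0 < R := h0.trans hrR
  set B := ∑' p, R ^ p * |c p| with hBdef
  have hB0 : 0 ≤ B := tsum_nonneg fun p => mul_nonneg (pow_nonneg hR.le p) (abs_nonneg _)
  have hbd := coeff_le hR hs
  set u : ℕ → ℝ := fun p => B / R ^ p * ((p : ℝ) * r ^ p) with hu_def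
  have hq1 : (r / R) < 1 := (div_lt_one hR).2 hrR
  have hq0 : 0 ≤ r / R := div_nonneg h0.le hR.le
  have hu : Summable u := by
    have hg := summable_pow_mul_geometric_of_norm_lt_one (R := ℝ) 1
      (r := r / R) (by rwa [Real.norm_eq_abs, abs_of_nonneg hq0])
    refine (hg.mul_left B).congr fun p => ?_
    show B * ((p:ℝ) ^ 1 * (r / R) ^ p) = B / R ^ p * ((p : ℝ) * r ^ p)
    rw [pow_one, div_pow]
    ring
  have hub : ∀ (p : ℕ) (y : ℝ), y ∈ Ioo (-r) r → ‖c p * ((p : ℕ) * y ^ (p - 1))‖ ≤ u p := by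
    intro p y hy
    have hya : |y| < r := abs_lt.2 ⟨hy.1, hy.2⟩
    rw [Real.norm_eq_abs, abs_mul, abs_mul, abs_pow, Nat.abs_cast]
    have hb1 : |c p| * ((p : ℝ) * |y| ^ (p - 1)) ≤ (B / R ^ p) * ((p : ℝ) * r ^ (p - 1)) := by
      refine mul_le_mul (hbd p) ?_ (by positivity) (by positivity)
      exact mul_le_mul_of_nonneg_left (pow_le_pow_left₀ (abs_nonneg y) hya.le _) (Nat.cast_nonneg p)
    refine hb1.trans ?_
    have hrp : r ^ (p - 1) ≤ r ^ p := pow_le_pow_right₀ h1 (Nat.sub_le p 1)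
    show (B / R ^ p) * ((p : ℝ) * r ^ (p - 1)) ≤ B / R ^ p * ((p : ℝ) * r ^ p)
    exact mul_le_mul_of_nonneg_left
      (mul_le_mul_of_nonneg_left hrp (Nat.cast_nonneg p)) (by positivity)
  have hg0 : Summable fun p => c p * (0:ℝ) ^ p := by
    apply summable_of_ne_finset_zero (s := {0})
    intro p hp
    have : p ≠ 0 := by simpa using hp
    simp [zero_pow this]
  have key := hasDerivAt_tsum_of_isPreconnected hu (isOpen_Ioo (a := -r) (b := r))
    (isPreconnected_Ioo)
    (fun p y _ => (hasDerivAt_pow p y).const_mul (c p))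
    hub (by constructor <;> [linarith; exact h0] : (0:ℝ) ∈ Ioo (-r) r) hg0
    (⟨(abs_lt.1 hx).1, (abs_lt.1 hx).2⟩ : x ∈ Ioo (-r) r)
  convert key using 1
  case e'_4 => rfl
  case e'_5 => rfl
  have hsum' : Summable fun p => c p * ((p : ℕ) * x ^ (p - 1)) := by
    refine Summable.of_norm_bounded hu fun p => hub p x ⟨(abs_lt.1 hx).1, (abs_lt.1 hx).2⟩
  rw [Summable.tsum_eq_zero_add hsum']
  simp only [Nat.cast_zero, zero_mul, mul_zero, zero_add]
  refine tsum_congr fun p => ?_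
  push_cast
  ring

lemma ae_ne_pt (b : ℝ) : ∀ᵐ x : ℝ, x ≠ b := by
  rw [MeasureTheory.ae_iff]
  have : {x : ℝ | ¬x ≠ b} = {b} := by ext x; simp
  rw [this]
  exact measure_singleton b

lemma integral_congr_Ico {f g : ℝ → ℝ} {a b : ℝ} (hab : a ≤ b)
    (h : ∀ x ∈ Ico a b, f x = g x) : ∫ x in a..b, f x = ∫ x in a..b, g x := by
  apply intervalIntegral.integral_congr_ae
  filter_upwards [ae_ne_pt b] with x hx hmem
  rw [Set.uIoc_of_le hab] at hmem
  exact h x ⟨hmem.1.le, lt_of_le_of_ne hmem.2 hx⟩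

lemma intervalIntegrable_congr_Ico {f g : ℝ → ℝ} {a b : ℝ} (hab : a ≤ b)
    (h : ∀ x ∈ Ico a b, f x = g x) (hg : IntervalIntegrable g volume a b) :
    IntervalIntegrable f volume a b := by
  rw [intervalIntegrable_iff_integrableOn_Ioc_of_le hab] at hg ⊢
  refine hg.congr ?_
  have h2 : ∀ᵐ x ∂(volume.restrict (Ioc a b)), x ≠ b :=
    MeasureTheory.ae_restrict_of_ae (ae_ne_pt b)
  have h3 : ∀ᵐ x ∂(volume.restrict (Ioc a b)), x ∈ Ioc a b :=
    MeasureTheory.ae_restrict_mem measurableSet_Ioc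
  filter_upwards [h2, h3] with x hx hxm
  exact (h x ⟨hxm.1.le, lt_of_le_of_ne hxm.2 hx⟩).symm

end Stmt8A

theorem stmt_8 (γ : ℕ → ℝ) (hγ : ∀ p, 0 ≤ γ p) (hγ0 : γ 0 = 0) (hγ1 : γ 1 = 0)
    (hsum : Summable fun p => 2 ^ p * γ p ^ 2) (h : ℝ)
    (ξ : ℝ → ℝ) (hξ : ∀ s : ℝ, ξ s = ∑' p : ℕ, γ p ^ 2 * s ^ p)
    (hlow : deriv ξ 1 + h ^ 2 < deriv (deriv ξ) 1)
    (hconc : ConcaveOn ℝ (Set.Ioc 0 1) fun s => (Real.sqrt (deriv (deriv ξ) s))⁻¹)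
    (q₀ : ℝ) (hq₀ : q₀ ∈ Set.Icc (0:ℝ) 1)
    (hq₀eq : deriv ξ q₀ + h ^ 2 = q₀ * deriv (deriv ξ) q₀)
    (L : ℝ) (hL : L = (Real.sqrt (deriv (deriv ξ) q₀))⁻¹)
    (α : ℝ → ℝ)
    (hα : ∀ s ∈ Set.Ico (0:ℝ) 1, α s =
      if s < q₀ then 0
      else deriv (deriv (deriv ξ)) s / (2 * (deriv (deriv ξ) s) ^ ((3:ℝ) / 2))) :
    MonotoneOn α (Set.Ico (0:ℝ) 1) ∧
    (∫ q in (0:ℝ)..1, 1 / (L - ∫ r in (0:ℝ)..q, α r) ^ 2) = deriv ξ 1 + h ^ 2 := by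
  classical
  obtain ⟨hq₀0, hq₀1⟩ := hq₀
  -- coefficient sequences
  set c0 : ℕ → ℝ := fun p => γ p ^ 2 with hc0
  set c1 : ℕ → ℝ := fun p => (((p : ℕ) + 1 : ℕ) : ℝ) * c0 (p + 1) with hc1
  set c2 : ℕ → ℝ := fun p => (((p : ℕ) + 1 : ℕ) : ℝ) * c1 (p + 1) with hc2
  set c3 : ℕ → ℝ := fun p => (((p : ℕ) + 1 : ℕ) : ℝ) * c2 (p + 1) with hc3
  have hc0nn : ∀ p, 0 ≤ c0 p := fun p => sq_nonneg _
  have hc1nn : ∀ p, 0 ≤ c1 p := fun p => mul_nonneg (by positivity) (hc0nn _)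
  have hc2nn : ∀ p, 0 ≤ c2 p := fun p => mul_nonneg (by positivity) (hc1nn _)
  have hc3nn : ∀ p, 0 ≤ c3 p := fun p => mul_nonneg (by positivity) (hc2nn _)
  have hs0 : Summable fun p => (2:ℝ) ^ p * |c0 p| := by
    refine hsum.congr fun p => ?_
    rw [hc0]
    rw [abs_of_nonneg (sq_nonneg _)]
  have hs1 : Summable fun p => ((7:ℝ)/4) ^ p * |c1 p| :=
    Stmt8A.summable_D (by norm_num) (by norm_num) hs0
  have hs2 : Summable fun p => ((3:ℝ)/2) ^ p * |c2 p| :=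
    Stmt8A.summable_D (by norm_num) (by norm_num) hs1
  have hs3 : Summable fun p => ((5:ℝ)/4) ^ p * |c3 p| :=
    Stmt8A.summable_D (by norm_num) (by norm_num) hs2
  -- the sum functions
  set S0 : ℝ → ℝ := fun x => ∑' p, c0 p * x ^ p with hS0
  set S1 : ℝ → ℝ := fun x => ∑' p, c1 p * x ^ p with hS1
  set S2 : ℝ → ℝ := fun x => ∑' p, c2 p * x ^ p with hS2
  set S3 : ℝ → ℝ := fun x => ∑' p, c3 p * x ^ p with hS3
  have hξeq : ξ = S0 := funext hξ
  -- derivatives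
  have hd0 : ∀ x : ℝ, |x| < 9/8 → HasDerivAt S0 (S1 x) x := fun x hx =>
    Stmt8A.hasDerivAt_tsum_pow (by norm_num) (by norm_num : (9:ℝ)/8 < 2) hs0 hx
  have hd1 : ∀ x : ℝ, |x| < 9/8 → HasDerivAt S1 (S2 x) x := fun x hx =>
    Stmt8A.hasDerivAt_tsum_pow (by norm_num) (by norm_num : (9:ℝ)/8 < 7/4) hs1 hx
  have hd2 : ∀ x : ℝ, |x| < 9/8 → HasDerivAt S2 (S3 x) x := fun x hx =>
    Stmt8A.hasDerivAt_tsum_pow (by norm_num) (by norm_num : (9:ℝ)/8 < 3/2) hs2 hx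
  have hd3 : ∀ x : ℝ, |x| < 9/8 → HasDerivAt S3
      (∑' p, (((p : ℕ) + 1 : ℕ) : ℝ) * c3 (p + 1) * x ^ p) x := fun x hx =>
    Stmt8A.hasDerivAt_tsum_pow (by norm_num) (by norm_num : (9:ℝ)/8 < 5/4) hs3 hx
  have hmem : ∀ x : ℝ, |x| < 9/8 → Ioo (-(9:ℝ)/8) (9/8) ∈ nhds x := fun x hx => by
    refine Ioo_mem_nhds ?_ ?_ <;> [linarith [(abs_lt.1 hx).1]; exact (abs_lt.1 hx).2]
  have hD1 : ∀ x : ℝ, |x| < 9/8 → deriv ξ x = S1 x := fun x hx => by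
    rw [hξeq]; exact (hd0 x hx).deriv
  have hD2 : ∀ x : ℝ, |x| < 9/8 → deriv (deriv ξ) x = S2 x := fun x hx => by
    have hev : deriv ξ =ᶠ[nhds x] S1 := by
      filter_upwards [hmem x hx] with y hy
      exact hD1 y (abs_lt.2 ⟨by linarith [hy.1], hy.2⟩)
    rw [hev.deriv_eq]
    exact (hd1 x hx).deriv
  have hD3 : ∀ x : ℝ, |x| < 9/8 → deriv (deriv (deriv ξ)) x = S3 x := fun x hx => by
    have hev : deriv (deriv ξ) =ᶠ[nhds x] S2 := by
      filter_upwards [hmem x hx] with y hy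
      exact hD2 y (abs_lt.2 ⟨by linarith [hy.1], hy.2⟩)
    rw [hev.deriv_eq]
    exact (hd2 x hx).deriv
  have habs : ∀ x : ℝ, 0 ≤ x → x ≤ 1 → |x| < 9/8 := fun x h0 h1 => by
    rw [abs_of_nonneg h0]; linarith
  -- nonnegativity / positivity
  have hS2nn : ∀ x : ℝ, 0 ≤ x → 0 ≤ S2 x := fun x hx => by
    rw [hS2]
    exact tsum_nonneg fun p => mul_nonneg (hc2nn p) (pow_nonneg hx p)
  have hS3nn : ∀ x : ℝ, 0 ≤ x → 0 ≤ S3 x := fun x hx => by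
    rw [hS3]
    exact tsum_nonneg fun p => mul_nonneg (hc3nn p) (pow_nonneg hx p)
  have hlow' : S1 1 + h ^ 2 < S2 1 := by
    rwa [hD1 1 (by norm_num), hD2 1 (by norm_num)] at hlow
  have hex : ∃ m : ℕ, γ (m + 3) ≠ 0 := by
    by_contra hz
    push_neg at hz
    have hS1v : S1 1 = 2 * γ 2 ^ 2 := by
      simp only [hS1]
      rw [tsum_eq_sum (s := ({1} : Finset ℕ)) ?_]
      · norm_num [hc1, hc0]
      · intro p hp
        rcases p with _ | _ | m
        · simp [hc1, hc0, hγ1]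
        · simp at hp
        · simp [hc1, hc0, hz m]
    have hS2v : S2 1 = 2 * γ 2 ^ 2 := by
      simp only [hS2]
      rw [tsum_eq_sum (s := ({0} : Finset ℕ)) ?_]
      · norm_num [hc2, hc1, hc0]
      · intro p hp
        rcases p with _ | m
        · simp at hp
        · simp [hc2, hc1, hc0, hz m]
    rw [hS1v, hS2v] at hlow'
    nlinarith [sq_nonneg h]
  obtain ⟨m, hm⟩ := hex
  have hγm : 0 < γ (m + 3) ^ 2 :=
    lt_of_le_of_ne (sq_nonneg _) (Ne.symm (pow_ne_zero 2 hm))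
  have hS2pos : ∀ x : ℝ, 0 < x → x ≤ 1 → 0 < S2 x := by
    intro x hx hx1
    have hsx : Summable fun p => c2 p * x ^ p :=
      Stmt8A.summable_eval hs2 (by rw [abs_of_nonneg hx.le]; linarith)
    have hcpos : 0 < c2 (m + 1) := by
      have hcv : c2 (m + 1) = ((m:ℝ) + 2) * (((m:ℝ) + 3) * γ (m + 3) ^ 2) := by
        simp only [hc2, hc1, hc0]
        push_cast
        ring_nf
      rw [hcv]
      exact mul_pos (by positivity) (mul_pos (by positivity) hγm)
    have hterm : 0 < c2 (m + 1) * x ^ (m + 1) := mul_pos hcpos (pow_pos hx _)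
    have hle : c2 (m + 1) * x ^ (m + 1) ≤ ∑' p, c2 p * x ^ p :=
      Summable.le_tsum hsx (m + 1) fun j _ => mul_nonneg (hc2nn j) (pow_nonneg hx.le j)
    rw [hS2]
    exact lt_of_lt_of_le hterm hle
  have hq₀lt1 : q₀ < 1 := by
    rcases lt_or_eq_of_le hq₀1 with hlt | heq
    · exact hlt
    · exfalso
      rw [heq] at hq₀eq
      rw [hD1 1 (by norm_num), hD2 1 (by norm_num)] at hq₀eq
      rw [one_mul] at hq₀eq
      linarith
  have hcont2 : ∀ x : ℝ, |x| < 9/8 → ContinuousAt S2 x := fun x hx => (hd2 x hx).continuousAt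
  have hS2q₀pos : 0 < S2 q₀ := by
    rcases lt_or_eq_of_le hq₀0 with hq | hq
    · exact hS2pos q₀ hq hq₀1
    · -- q₀ = 0 : use concavity to bound ξ'' below
      set f : ℝ → ℝ := fun s => (Real.sqrt (deriv (deriv ξ) s))⁻¹ with hf
      have hfS : ∀ s : ℝ, 0 ≤ s → s ≤ 1 → f s = (Real.sqrt (S2 s))⁻¹ := fun s h0 h1 => by
        rw [hf]
        simp only
        rw [hD2 s (habs s h0 h1)]
      have hfcont : ContinuousOn f (Icc (1/2 : ℝ) 1) := by
        intro s hs
        have hx : |s| < 9/8 := habs s (by linarith [hs.1]) hs.2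
        have h1 : ContinuousAt (fun y => (Real.sqrt (S2 y))⁻¹) s := by
          refine ContinuousAt.inv₀ (Real.continuous_sqrt.continuousAt.comp (hcont2 s hx)) ?_
          exact (Real.sqrt_pos.2 (hS2pos s (by linarith [hs.1]) hs.2)).ne'
        have hev : (fun y => (Real.sqrt (S2 y))⁻¹) =ᶠ[nhds s] f := by
          filter_upwards [hmem s hx] with y hy
          rw [hf]
          simp only
          rw [hD2 y (abs_lt.2 ⟨by linarith [hy.1], hy.2⟩)]
        exact (h1.congr hev).continuousWithinAt
      obtain ⟨z, hz, hmax⟩ := isCompact_Icc.exists_isMaxOn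
        (⟨1, by norm_num, le_refl 1⟩ : (Icc (1/2:ℝ) 1).Nonempty) hfcont
      set M := f z with hM
      have hf1pos : 0 < f 1 := by
        rw [hfS 1 zero_le_one le_rfl]
        exact inv_pos.2 (Real.sqrt_pos.2 (hS2pos 1 one_pos le_rfl))
      have hM0 : 0 < M := lt_of_lt_of_le hf1pos (hmax ⟨by norm_num, le_rfl⟩)
      have hkey : ∀ x ∈ Ioc (0:ℝ) 1, (1/(2*M))^2 ≤ S2 x := by
        intro x hx
        have hcc := hconc.2 (⟨hx.1, hx.2⟩ : x ∈ Ioc (0:ℝ) 1)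
          (⟨one_pos, le_rfl⟩ : (1:ℝ) ∈ Ioc (0:ℝ) 1)
          (by norm_num : (0:ℝ) ≤ 1/2) (by norm_num : (0:ℝ) ≤ 1/2) (by norm_num)
        simp only [smul_eq_mul] at hcc
        have hmid : (1/2 : ℝ) * x + (1/2) * 1 ∈ Icc (1/2:ℝ) 1 := by
          constructor <;> [linarith [hx.1]; linarith [hx.2]]
        have hmidM : f ((1/2 : ℝ) * x + (1/2) * 1) ≤ M := hmax hmid
        have hf1nn : 0 ≤ f 1 := hf1pos.le
        have hfx : f x ≤ 2 * M := by
          have := hcc.trans hmidM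
          -- (1/2) * f x + (1/2) * f 1 ≤ M
          change (1/2) * f x + (1/2) * f 1 ≤ M at this
          linarith
        rw [hfS x hx.1.le hx.2] at hfx
        have hsq : 0 < Real.sqrt (S2 x) := Real.sqrt_pos.2 (hS2pos x hx.1 hx.2)
        have h2M : (0:ℝ) < 2 * M := by linarith
        have hin : (2 * M)⁻¹ ≤ Real.sqrt (S2 x) := (inv_le_comm₀ hsq h2M).mp hfx
        have : ((2*M)⁻¹)^2 ≤ Real.sqrt (S2 x) ^ 2 := by
          exact pow_le_pow_left₀ (by positivity) hin 2
        rw [Real.sq_sqrt (hS2nn x hx.1.le)] at this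
        calc (1/(2*M))^2 = ((2*M)⁻¹)^2 := by rw [one_div]
        _ ≤ S2 x := this
      have hlim : Tendsto S2 (nhdsWithin (0:ℝ) (Ioi 0)) (nhds (S2 0)) :=
        ((hcont2 0 (by norm_num)).continuousWithinAt).tendsto
      have hge : (1/(2*M))^2 ≤ S2 0 := by
        refine ge_of_tendsto hlim ?_
        filter_upwards [Ioo_mem_nhdsGT_of_mem (⟨le_refl (0:ℝ), zero_lt_one⟩)] with t ht
        exact hkey t ⟨ht.1, ht.2.le⟩
      rw [← hq]
      exact lt_of_lt_of_le (by positivity) hge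
  have hS2posIcc : ∀ x ∈ Icc q₀ 1, 0 < S2 x := by
    intro x hx
    rcases lt_or_eq_of_le (hq₀0.trans hx.1) with h0 | h0
    · exact hS2pos x h0 hx.2
    · have hq0 : q₀ = 0 := le_antisymm (h0 ▸ hx.1) hq₀0
      have hxq : x = q₀ := by rw [hq0, ← h0]
      rw [hxq]; exact hS2q₀pos
  have hLval : L = (Real.sqrt (S2 q₀))⁻¹ := by
    rw [hL, hD2 q₀ (habs q₀ hq₀0 hq₀1)]
  have hLpos : 0 < L := by
    rw [hLval]
    exact inv_pos.2 (Real.sqrt_pos.2 hS2q₀pos)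
  set φ : ℝ → ℝ := fun s => S3 s / (2 * (S2 s) ^ ((3:ℝ)/2)) with hφ
  have hαeq : ∀ s, q₀ ≤ s → s < 1 → α s = φ s := by
    intro s h0 h1
    rw [hα s ⟨hq₀0.trans h0, h1⟩, if_neg (not_lt.2 h0)]
    simp only [hφ]
    rw [hD2 s (habs s (hq₀0.trans h0) h1.le), hD3 s (habs s (hq₀0.trans h0) h1.le)]
  have hα0 : ∀ s, 0 ≤ s → s < q₀ → α s = 0 := fun s h0 h1 => by
    rw [hα s ⟨h0, h1.trans_le hq₀1⟩, if_pos h1]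
  have hrpow : ∀ u : ℝ, 0 < u → u ^ ((3:ℝ)/2) = u * Real.sqrt u := by
    intro u hu
    rw [show (3:ℝ)/2 = 1 + 1/2 by norm_num, Real.rpow_add hu, Real.rpow_one,
      Real.sqrt_eq_rpow]
  have hφnn : ∀ s, 0 ≤ s → s ≤ 1 → 0 ≤ φ s := by
    intro s h0 h1
    simp only [hφ]
    exact div_nonneg (hS3nn s h0)
      (mul_nonneg (by norm_num) (Real.rpow_nonneg (hS2nn s h0) _))
  have hgd : ∀ s, 0 ≤ s → s ≤ 1 → 0 < S2 s →
      HasDerivAt (fun y => -(Real.sqrt (S2 y))⁻¹) (φ s) s := by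
    intro s h0 h1 hpos
    have hds := hd2 s (habs s h0 h1)
    have hsqrt : HasDerivAt (fun y => Real.sqrt (S2 y)) (S3 s / (2 * Real.sqrt (S2 s))) s :=
      hds.sqrt hpos.ne'
    have hsq0 : Real.sqrt (S2 s) ≠ 0 := (Real.sqrt_pos.2 hpos).ne'
    have hres := (hsqrt.inv hsq0).neg
    convert hres using 1
    case e'_4 => rfl
    case e'_5 => rfl
    case e'_8 => rfl
    simp only [hφ]
    rw [hrpow _ hpos, neg_div, neg_neg, Real.sq_sqrt hpos.le, div_div]
    ring
  -- monotonicity of φ on [q₀, 1)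
  have hkey : ∀ a b : ℝ, 0 < a → a < b → b ≤ 1 → φ a ≤ φ b := by
    intro a b ha hab hb1
    have hFder : ∀ s : ℝ, 0 < s → s ≤ 1 →
        HasDerivAt (fun u => -(Real.sqrt (deriv (deriv ξ) u))⁻¹) (φ s) s := by
      intro s hs0 hs1
      refine (hgd s hs0.le hs1 (hS2pos s hs0 hs1)).congr_of_eventuallyEq ?_
      filter_upwards [hmem s (habs s hs0.le hs1)] with u hu
      rw [hD2 u (abs_lt.2 ⟨by linarith [hu.1], hu.2⟩)]
    have hcv := hconc.neg
    have hma : a ∈ Ioc (0:ℝ) 1 := ⟨ha, hab.le.trans hb1⟩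
    have hmb : b ∈ Ioc (0:ℝ) 1 := ⟨ha.trans hab, hb1⟩
    have h1 := hcv.le_slope_of_hasDerivAt hma hmb hab (hFder a ha (hab.le.trans hb1))
    have h2 := hcv.slope_le_of_hasDerivAt hma hmb hab (hFder b (ha.trans hab) hb1)
    exact h1.trans h2
  have hφmono : ∀ x y, q₀ ≤ x → x < y → y < 1 → φ x ≤ φ y := by
    intro x y hx hxy hy1
    have hx0 : 0 ≤ x := hq₀0.trans hx
    have hy0 : 0 < y := lt_of_le_of_lt hx0 hxy
    rcases lt_or_eq_of_le hx0 with hpos | hzero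
    · exact hkey x y hpos hxy hy1.le
    · have hq0 : q₀ = 0 := le_antisymm (hzero ▸ hx) hq₀0
      have h20 : 0 < S2 0 := by have := hS2q₀pos; rwa [hq0] at this
      have hφcont : ContinuousAt φ 0 := by
        have hc3' : ContinuousAt S3 0 := (hd3 0 (by norm_num)).continuousAt
        have hc2' : ContinuousAt S2 0 := hcont2 0 (by norm_num)
        simp only [hφ]
        refine ContinuousAt.div hc3' ?_ ?_
        · exact continuousAt_const.mul
            ((Real.continuousAt_rpow_const _ _ (Or.inl h20.ne')).comp hc2')
        · exact ne_of_gt (mul_pos two_pos (Real.rpow_pos_of_pos h20 _))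
      have htend : Tendsto φ (nhdsWithin 0 (Ioi 0)) (nhds (φ 0)) :=
        hφcont.continuousWithinAt.tendsto
      rw [← hzero]
      refine le_of_tendsto htend ?_
      filter_upwards [Ioo_mem_nhdsGT_of_mem (⟨le_refl (0:ℝ), hy0⟩)] with t ht
      exact hkey t y ht.1 ht.2 hy1.le
  have hmono : MonotoneOn α (Ico (0:ℝ) 1) := by
    intro x hx y hy hxy
    rcases eq_or_lt_of_le hxy with rfl | hlt
    · exact le_rfl
    rcases lt_or_ge y q₀ with hyq | hyq
    · rw [hα0 x hx.1 (hlt.trans hyq), hα0 y hy.1 hyq]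
    · rw [hαeq y hyq hy.2]
      rcases lt_or_ge x q₀ with hxq | hxq
      · rw [hα0 x hx.1 hxq]
        exact hφnn y (hq₀0.trans hyq) hy.2.le
      · rw [hαeq x hxq hx.2]
        exact hφmono x y hxq hlt hy.2
  refine ⟨hmono, ?_⟩
  -- continuity of φ on [q₀, 1]
  have hφcontOn : ContinuousOn φ (Icc q₀ 1) := by
    intro s hs
    have hx : |s| < 9/8 := habs s (hq₀0.trans hs.1) hs.2
    have hpos := hS2posIcc s hs
    have hc3' : ContinuousAt S3 s := (hd3 s hx).continuousAt
    have hc2' : ContinuousAt S2 s := hcont2 s hx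
    simp only [hφ]
    refine (ContinuousAt.div hc3' ?_ ?_).continuousWithinAt
    · exact continuousAt_const.mul
        ((Real.continuousAt_rpow_const _ _ (Or.inl hpos.ne')).comp hc2')
    · exact ne_of_gt (mul_pos two_pos (Real.rpow_pos_of_pos hpos _))
  have hαInt0 : IntervalIntegrable α volume 0 q₀ :=
    Stmt8A.intervalIntegrable_congr_Ico hq₀0
      (fun x hx => hα0 x hx.1 hx.2) (_root_.intervalIntegrable_const (c := (0:ℝ)))
  have hA0 : ∀ q, 0 ≤ q → q ≤ q₀ → (∫ r in (0:ℝ)..q, α r) = 0 := by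
    intro q h0 hq
    rw [Stmt8A.integral_congr_Ico h0 (fun x hx => hα0 x hx.1 (lt_of_lt_of_le hx.2 hq))]
    simp
  have hgder : ∀ s ∈ Icc q₀ 1, HasDerivAt (fun y => -(Real.sqrt (S2 y))⁻¹) (φ s) s :=
    fun s hs => hgd s (hq₀0.trans hs.1) hs.2 (hS2posIcc s hs)
  have hAq : ∀ q, q₀ ≤ q → q ≤ 1 → (∫ r in (0:ℝ)..q, α r) = L - (Real.sqrt (S2 q))⁻¹ := by
    intro q hq hq1
    have hint1 : IntervalIntegrable φ volume q₀ q :=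
      (hφcontOn.mono (Icc_subset_Icc le_rfl hq1)).intervalIntegrable_of_Icc hq
    have hcongr : (∫ r in q₀..q, α r) = ∫ r in q₀..q, φ r :=
      Stmt8A.integral_congr_Ico hq (fun x hx => hαeq x hx.1 (lt_of_lt_of_le hx.2 hq1))
    have hftc : (∫ r in q₀..q, φ r)
        = (-(Real.sqrt (S2 q))⁻¹) - (-(Real.sqrt (S2 q₀))⁻¹) := by
      refine intervalIntegral.integral_eq_sub_of_hasDerivAt
        (f := fun y => -(Real.sqrt (S2 y))⁻¹) (fun s hs => ?_) hint1
      rw [uIcc_of_le hq] at hs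
      exact hgder s ⟨hs.1, hs.2.trans hq1⟩
    have hαint2 : IntervalIntegrable α volume q₀ q :=
      Stmt8A.intervalIntegrable_congr_Ico hq
        (fun x hx => hαeq x hx.1 (lt_of_lt_of_le hx.2 hq1)) hint1
    rw [← intervalIntegral.integral_add_adjacent_intervals hαInt0 hαint2,
      hA0 q₀ hq₀0 le_rfl, hcongr, hftc, hLval]
    ring
  have hGval1 : ∀ q ∈ Icc (0:ℝ) q₀, (1 / (L - ∫ r in (0:ℝ)..q, α r) ^ 2) = S2 q₀ := by
    intro q hq
    rw [hA0 q hq.1 hq.2, sub_zero, hLval, inv_pow, one_div, inv_inv,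
      Real.sq_sqrt hS2q₀pos.le]
  have hGval2 : ∀ q ∈ Icc q₀ 1, (1 / (L - ∫ r in (0:ℝ)..q, α r) ^ 2) = S2 q := by
    intro q hq
    rw [hAq q hq.1 hq.2, show L - (L - (Real.sqrt (S2 q))⁻¹) = (Real.sqrt (S2 q))⁻¹ by ring,
      inv_pow, one_div, inv_inv, Real.sq_sqrt (hS2nn q (hq₀0.trans hq.1))]
  have hS2contOn : ContinuousOn S2 (Icc q₀ 1) := fun s hs =>
    (hcont2 s (habs s (hq₀0.trans hs.1) hs.2)).continuousWithinAt
  have hGint1 : IntervalIntegrable (fun q => 1 / (L - ∫ r in (0:ℝ)..q, α r) ^ 2) volume 0 q₀ :=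
    Stmt8A.intervalIntegrable_congr_Ico hq₀0
      (fun x hx => hGval1 x ⟨hx.1, hx.2.le⟩) (_root_.intervalIntegrable_const (c := S2 q₀))
  have hGint2 : IntervalIntegrable (fun q => 1 / (L - ∫ r in (0:ℝ)..q, α r) ^ 2) volume q₀ 1 :=
    Stmt8A.intervalIntegrable_congr_Ico hq₀1
      (fun x hx => hGval2 x ⟨hx.1, hx.2.le⟩)
      (hS2contOn.intervalIntegrable_of_Icc hq₀1)
  have hI1 : (∫ q in (0:ℝ)..q₀, 1 / (L - ∫ r in (0:ℝ)..q, α r) ^ 2) = q₀ * S2 q₀ := by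
    rw [intervalIntegral.integral_congr (g := fun _ => S2 q₀)
      (fun x hx => hGval1 x (by rwa [uIcc_of_le hq₀0] at hx))]
    rw [intervalIntegral.integral_const, smul_eq_mul, sub_zero]
  have hI2 : (∫ q in q₀..(1:ℝ), 1 / (L - ∫ r in (0:ℝ)..q, α r) ^ 2) = S1 1 - S1 q₀ := by
    rw [intervalIntegral.integral_congr (g := S2)
      (fun x hx => hGval2 x (by rwa [uIcc_of_le hq₀1] at hx))]
    refine intervalIntegral.integral_eq_sub_of_hasDerivAt (fun s hs => ?_)
      (hS2contOn.intervalIntegrable_of_Icc hq₀1)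
    rw [uIcc_of_le hq₀1] at hs
    exact hd1 s (habs s (hq₀0.trans hs.1) hs.2)
  have hq₀eq' : S1 q₀ + h ^ 2 = q₀ * S2 q₀ := by
    rwa [hD1 q₀ (habs q₀ hq₀0 hq₀1), hD2 q₀ (habs q₀ hq₀0 hq₀1)] at hq₀eq
  rw [← intervalIntegral.integral_add_adjacent_intervals hGint1 hGint2, hI1, hI2,
    hD1 1 (by norm_num)]
  linarith
end

section
/- Under the hypotheses ξ'(1) + h² < ξ''(1) and ξ''(s)^{−1/2} concave on (0,1], with q₀ the unique solution of ξ'(q₀)+h² = q₀ξ''(q₀), L = ξ''(q₀)^{−1/2}, and α as in the full-RSB ansatz, the value of the zero-temperature functional satisfies Q(L,α) = q₀·ξ''(q₀)^{1/2} + ∫_{q₀}¹ ξ''(q)^{1/2} dq. -/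
open Set

lemma aux_master (γ : ℕ → ℝ) (hsum : Summable fun p => 2 ^ p * γ p ^ 2) (j : ℕ) :
    Summable fun p : ℕ => (1.3:ℝ) ^ p * ((p:ℝ) + 4) ^ 11 * γ (p + j) ^ 2 := by
  have hbase : Summable fun p : ℕ => ((p:ℝ) + 4) ^ 11 * (0.65:ℝ) ^ p := by
    have h1 : Summable fun p : ℕ => (48828125:ℝ) * ((p:ℝ) ^ 11 * (0.65:ℝ) ^ p) :=
      (summable_pow_mul_geometric_of_norm_lt_one (R := ℝ) 11 (by rw [Real.norm_eq_abs, abs_of_nonneg (by norm_num : (0:ℝ) ≤ 0.65)]; norm_num)).mul_left _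
    have h2 : Summable fun p : ℕ => (48828125:ℝ) * (0.65:ℝ) ^ p :=
      (summable_geometric_of_lt_one (by norm_num) (by norm_num)).mul_left _
    refine Summable.of_nonneg_of_le (fun p => by positivity) (fun p => ?_) (h1.add h2)
    have hp : (0:ℝ) ≤ (p:ℝ) := Nat.cast_nonneg p
    have key : ((p:ℝ) + 4) ^ 11 ≤ 48828125 * ((p:ℝ) ^ 11 + 1) := by
      have hm : ((p:ℝ) + 4) ≤ 5 * max (p:ℝ) 1 := by
        rcases max_cases (p:ℝ) 1 with ⟨he, hc⟩ | ⟨he, hc⟩ <;> rw [he] <;> linarith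
      have h8 : ((p:ℝ) + 4) ^ 11 ≤ (5 * max (p:ℝ) 1) ^ 11 :=
        pow_le_pow_left₀ (by linarith) hm 11
      have hmax : (max (p:ℝ) 1) ^ 11 ≤ (p:ℝ) ^ 11 + 1 := by
        rcases max_cases (p:ℝ) 1 with ⟨he, hc⟩ | ⟨he, hc⟩ <;> rw [he] <;> nlinarith [pow_nonneg hp 11]
      calc ((p:ℝ) + 4) ^ 11 ≤ (5:ℝ) ^ 11 * (max (p:ℝ) 1) ^ 11 := by rw [← mul_pow]; exact h8
        _ ≤ (5:ℝ)^11 * ((p:ℝ) ^ 11 + 1) := by nlinarith [pow_nonneg hp 11]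
        _ ≤ 48828125 * ((p:ℝ) ^ 11 + 1) := by norm_num
    have hge : (0:ℝ) ≤ (0.65:ℝ) ^ p := by positivity
    nlinarith [mul_le_mul_of_nonneg_right key hge]
  obtain ⟨M, hM⟩ : ∃ M : ℝ, ∀ p : ℕ, ((p:ℝ) + 4) ^ 11 * (0.65:ℝ) ^ p ≤ M := by
    obtain ⟨M, hM⟩ := hbase.tendsto_atTop_zero.bddAbove_range
    exact ⟨M, fun p => hM (Set.mem_range_self p)⟩
  have hshift : Summable fun p : ℕ => M * (2 ^ (p + j) * γ (p + j) ^ 2) :=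
    ((hsum.comp_injective (add_left_injective j)).mul_left M)
  refine Summable.of_nonneg_of_le (fun p => by positivity) (fun p => ?_) hshift
  have h1 : ((p:ℝ) + 4) ^ 11 * (0.65:ℝ) ^ p ≤ M := hM p
  have h2 : (0:ℝ) ≤ γ (p + j) ^ 2 := sq_nonneg _
  have h3 : (1.3:ℝ) ^ p = (0.65:ℝ) ^ p * 2 ^ p := by
    rw [← mul_pow]; norm_num
  have h4 : (2:ℝ) ^ p ≤ 2 ^ (p + j) := by
    apply pow_le_pow_right₀ (by norm_num) (Nat.le_add_right p j)
  have h5 : (0:ℝ) ≤ (2:ℝ) ^ p := by positivity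
  have hM0 : (0:ℝ) ≤ M := le_trans (by positivity) (hM 0)
  calc (1.3:ℝ) ^ p * ((p:ℝ) + 4) ^ 11 * γ (p + j) ^ 2
      = (((p:ℝ) + 4) ^ 11 * (0.65:ℝ) ^ p) * ((2:ℝ) ^ p * γ (p + j) ^ 2) := by rw [h3]; ring
    _ ≤ M * ((2:ℝ) ^ p * γ (p + j) ^ 2) := by
        apply mul_le_mul_of_nonneg_right h1 (by positivity)
    _ ≤ M * (2 ^ (p + j) * γ (p + j) ^ 2) := by
        apply mul_le_mul_of_nonneg_left (by nlinarith) hM0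

lemma aux_ptSummable (c : ℕ → ℝ) (hc : Summable fun p : ℕ => (1.3:ℝ) ^ p * ((p:ℝ) + 4) ^ 8 * |c p|)
    {x : ℝ} (hx : |x| ≤ 1.3) : Summable fun p : ℕ => c p * x ^ p := by
  refine Summable.of_norm (Summable.of_nonneg_of_le (fun p => norm_nonneg _) (fun p => ?_) hc)
  rw [norm_mul, norm_pow, Real.norm_eq_abs, Real.norm_eq_abs]
  have h1 : |x| ^ p ≤ (1.3:ℝ) ^ p := pow_le_pow_left₀ (abs_nonneg x) hx p
  have h2 : (1:ℝ) ≤ ((p:ℝ) + 4) ^ 8 := by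
    have hp4 : (1:ℝ) ≤ (p:ℝ) + 4 := by have : (0:ℝ) ≤ (p:ℝ) := Nat.cast_nonneg p; linarith
    calc (1:ℝ) = 1 ^ 8 := by norm_num
      _ ≤ ((p:ℝ) + 4) ^ 8 := pow_le_pow_left₀ (by norm_num) hp4 8
  calc |c p| * |x| ^ p ≤ |c p| * ((1.3:ℝ) ^ p * ((p:ℝ) + 4) ^ 8) := by
        apply mul_le_mul_of_nonneg_left _ (abs_nonneg _)
        calc |x| ^ p ≤ (1.3:ℝ) ^ p := h1
          _ ≤ (1.3:ℝ) ^ p * ((p:ℝ) + 4) ^ 8 := le_mul_of_one_le_right (by positivity) h2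
    _ = (1.3:ℝ) ^ p * ((p:ℝ) + 4) ^ 8 * |c p| := by ring

lemma aux_key (c : ℕ → ℝ) (hc : Summable fun p : ℕ => (1.3:ℝ) ^ p * ((p:ℝ) + 4) ^ 8 * |c p|)
    {x : ℝ} (hx : x ∈ Set.Ioo (-1.3:ℝ) 1.3) :
    HasDerivAt (fun t : ℝ => ∑' p : ℕ, c p * t ^ p) (∑' p : ℕ, ((p:ℝ) + 1) * c (p + 1) * x ^ p) x := by
  have hd : ∀ (p : ℕ) (y : ℝ), y ∈ Set.Ioo (-1.3:ℝ) 1.3 →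
      HasDerivAt (fun t : ℝ => c p * t ^ p) (c p * ((p:ℝ) * y ^ (p - 1))) y :=
    fun p y _ => (hasDerivAt_pow p y).const_mul (c p)
  have hbound : ∀ (p : ℕ) (y : ℝ), y ∈ Set.Ioo (-1.3:ℝ) 1.3 →
      ‖c p * ((p:ℝ) * y ^ (p - 1))‖ ≤ (1.3:ℝ) ^ p * ((p:ℝ) + 4) ^ 8 * |c p| := by
    intro p y hy
    rw [Real.norm_eq_abs, abs_mul, abs_mul, abs_pow, Nat.abs_cast]
    have hyle : |y| ≤ 1.3 := by
      rw [abs_le]; exact ⟨hy.1.le, hy.2.le⟩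
    have h1 : |y| ^ (p - 1) ≤ (1.3:ℝ) ^ (p - 1) := pow_le_pow_left₀ (abs_nonneg y) hyle _
    have h2 : (1.3:ℝ) ^ (p - 1) ≤ (1.3:ℝ) ^ p :=
      pow_le_pow_right₀ (by norm_num) (Nat.sub_le p 1)
    have h3 : ((p:ℝ)) ≤ ((p:ℝ) + 4) ^ 8 := by
      have hp : (0:ℝ) ≤ (p:ℝ) := Nat.cast_nonneg p
      have : ((p:ℝ) + 4) ≤ ((p:ℝ) + 4) ^ 8 := le_self_pow₀ (by linarith) (by norm_num)
      linarith
    have hcp : (0:ℝ) ≤ |c p| := abs_nonneg _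
    have hyp : (0:ℝ) ≤ |y| ^ (p-1) := pow_nonneg (abs_nonneg y) _
    have hp : (0:ℝ) ≤ (p:ℝ) := Nat.cast_nonneg p
    calc |c p| * ((p:ℝ) * |y| ^ (p - 1)) ≤ |c p| * ((p:ℝ) * (1.3:ℝ) ^ p) := by
          apply mul_le_mul_of_nonneg_left _ hcp
          apply mul_le_mul_of_nonneg_left (le_trans h1 h2) hp
      _ ≤ (1.3:ℝ) ^ p * ((p:ℝ) + 4) ^ 8 * |c p| := by
          have h13 : (0:ℝ) ≤ (1.3:ℝ) ^ p := by positivity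
          nlinarith [mul_le_mul_of_nonneg_right h3 (mul_nonneg h13 hcp)]
  have h0mem : (0:ℝ) ∈ Set.Ioo (-1.3:ℝ) 1.3 := by norm_num
  have h0 : Summable fun p : ℕ => c p * (0:ℝ) ^ p := by
    apply summable_of_ne_finset_zero (s := {0})
    intro p hp
    simp only [Finset.mem_singleton] at hp
    rw [zero_pow hp, mul_zero]
  have H := hasDerivAt_tsum_of_isPreconnected hc isOpen_Ioo isPreconnected_Ioo
    hd hbound h0mem h0 hx
  refine H.congr_deriv ?_
  have hs : Summable fun p : ℕ => c p * ((p:ℝ) * x ^ (p - 1)) := by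
    refine Summable.of_norm (Summable.of_nonneg_of_le (fun p => norm_nonneg _) (fun p => hbound p x hx) hc)
  rw [Summable.tsum_eq_zero_add hs]
  simp only [Nat.cast_zero, zero_mul, mul_zero, zero_add, Nat.cast_add, Nat.cast_one,
    Nat.add_sub_cancel]
  exact tsum_congr fun p => by ring

lemma aux_compare (γ : ℕ → ℝ) (hsum : Summable fun p => 2 ^ p * γ p ^ 2) (j : ℕ) (c : ℕ → ℝ)
    (hcle : ∀ p : ℕ, |c p| ≤ ((p:ℝ) + 4) ^ 3 * γ (p + j) ^ 2) :
    Summable fun p : ℕ => (1.3:ℝ) ^ p * ((p:ℝ) + 4) ^ 8 * |c p| := by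
  refine Summable.of_nonneg_of_le (fun p => by positivity) (fun p => ?_) (aux_master γ hsum j)
  have h1 : (0:ℝ) ≤ (1.3:ℝ) ^ p * ((p:ℝ) + 4) ^ 8 := by positivity
  calc (1.3:ℝ) ^ p * ((p:ℝ) + 4) ^ 8 * |c p|
      ≤ (1.3:ℝ) ^ p * ((p:ℝ) + 4) ^ 8 * (((p:ℝ) + 4) ^ 3 * γ (p + j) ^ 2) :=
        mul_le_mul_of_nonneg_left (hcle p) h1
    _ = (1.3:ℝ) ^ p * ((p:ℝ) + 4) ^ 11 * γ (p + j) ^ 2 := by ring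

lemma aux_ae_ne (a : ℝ) : ∀ᵐ s : ℝ, s ≠ a := by
  rw [MeasureTheory.ae_iff]
  have : {x : ℝ | ¬ x ≠ a} = {a} := by ext x; simp
  rw [this]
  exact Real.volume_singleton

open Set MeasureTheory intervalIntegral

theorem stmt_9 (γ : ℕ → ℝ) (hγ : ∀ p, 0 ≤ γ p) (hγ0 : γ 0 = 0) (hγ1 : γ 1 = 0)
    (hsum : Summable fun p => 2 ^ p * γ p ^ 2) (h : ℝ)
    (ξ : ℝ → ℝ) (hξ : ∀ s : ℝ, ξ s = ∑' p : ℕ, γ p ^ 2 * s ^ p)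
    (hlow : deriv ξ 1 + h ^ 2 < deriv (deriv ξ) 1)
    (hconc : ConcaveOn ℝ (Set.Ioc 0 1) fun s => (Real.sqrt (deriv (deriv ξ) s))⁻¹)
    (q₀ : ℝ) (hq₀ : q₀ ∈ Set.Icc (0:ℝ) 1)
    (hq₀eq : deriv ξ q₀ + h ^ 2 = q₀ * deriv (deriv ξ) q₀)
    (L : ℝ) (hL : L = (Real.sqrt (deriv (deriv ξ) q₀))⁻¹)
    (α : ℝ → ℝ)
    (hα : ∀ s ∈ Set.Ico (0:ℝ) 1, α s =
      if s < q₀ then 0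
      else deriv (deriv (deriv ξ)) s / (2 * (deriv (deriv ξ) s) ^ ((3:ℝ) / 2))) :
    (1 / 2) * ((deriv ξ 1 + h ^ 2) * L
      - (∫ q in (0:ℝ)..1, deriv (deriv ξ) q * ∫ s in (0:ℝ)..q, α s)
      + ∫ q in (0:ℝ)..1, 1 / (L - ∫ s in (0:ℝ)..q, α s))
      = q₀ * Real.sqrt (deriv (deriv ξ) q₀) + ∫ q in q₀..1, Real.sqrt (deriv (deriv ξ) q) := by
  -- coefficients of the derivatives of ξ
  set C1 : ℕ → ℝ := fun p => ((p:ℝ) + 1) * γ (p + 1) ^ 2 with hC1def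
  set C2 : ℕ → ℝ := fun p => ((p:ℝ) + 1) * ((p:ℝ) + 2) * γ (p + 2) ^ 2 with hC2def
  set C3 : ℕ → ℝ := fun p => ((p:ℝ) + 1) * ((p:ℝ) + 2) * ((p:ℝ) + 3) * γ (p + 3) ^ 2 with hC3def
  set F1 : ℝ → ℝ := fun x => ∑' p : ℕ, C1 p * x ^ p with hF1def
  set F2 : ℝ → ℝ := fun x => ∑' p : ℕ, C2 p * x ^ p with hF2def
  set F3 : ℝ → ℝ := fun x => ∑' p : ℕ, C3 p * x ^ p with hF3def
  have hcast : ∀ p : ℕ, ((p:ℝ) + 4) ^ 3 = ((p:ℝ)+4)*((p:ℝ)+4)*((p:ℝ)+4) := fun p => by ring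
  have hc0 : Summable fun p : ℕ => (1.3:ℝ) ^ p * ((p:ℝ) + 4) ^ 8 * |γ p ^ 2| := by
    refine aux_compare γ hsum 0 _ fun p => ?_
    rw [abs_of_nonneg (sq_nonneg _)]
    have hp : (0:ℝ) ≤ (p:ℝ) := Nat.cast_nonneg p
    have h1 : (1:ℝ) ≤ ((p:ℝ) + 4) ^ 3 := by nlinarith [hp, pow_nonneg hp 2, pow_nonneg hp 3]
    simpa using le_mul_of_one_le_left (sq_nonneg (γ (p + 0))) h1
  have hc1 : Summable fun p : ℕ => (1.3:ℝ) ^ p * ((p:ℝ) + 4) ^ 8 * |C1 p| := by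
    refine aux_compare γ hsum 1 _ fun p => ?_
    have hp : (0:ℝ) ≤ (p:ℝ) := Nat.cast_nonneg p
    rw [hC1def, abs_of_nonneg (by positivity)]
    have h1 : ((p:ℝ) + 1) ≤ ((p:ℝ) + 4) ^ 3 := by nlinarith [hp, pow_nonneg hp 2, pow_nonneg hp 3]
    exact mul_le_mul_of_nonneg_right h1 (sq_nonneg _)
  have hc2 : Summable fun p : ℕ => (1.3:ℝ) ^ p * ((p:ℝ) + 4) ^ 8 * |C2 p| := by
    refine aux_compare γ hsum 2 _ fun p => ?_
    have hp : (0:ℝ) ≤ (p:ℝ) := Nat.cast_nonneg p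
    rw [hC2def, abs_of_nonneg (by positivity)]
    have h1 : ((p:ℝ) + 1) * ((p:ℝ) + 2) ≤ ((p:ℝ) + 4) ^ 3 := by nlinarith [hp, pow_nonneg hp 2, pow_nonneg hp 3]
    exact mul_le_mul_of_nonneg_right h1 (sq_nonneg _)
  have hc3 : Summable fun p : ℕ => (1.3:ℝ) ^ p * ((p:ℝ) + 4) ^ 8 * |C3 p| := by
    refine aux_compare γ hsum 3 _ fun p => ?_
    have hp : (0:ℝ) ≤ (p:ℝ) := Nat.cast_nonneg p
    rw [hC3def, abs_of_nonneg (by positivity)]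
    have h1 : ((p:ℝ) + 1) * ((p:ℝ) + 2) * ((p:ℝ) + 3) ≤ ((p:ℝ) + 4) ^ 3 := by nlinarith [hp, pow_nonneg hp 2, pow_nonneg hp 3]
    exact mul_le_mul_of_nonneg_right h1 (sq_nonneg _)
  -- derivatives
  have hsub01 : Icc (0:ℝ) 1 ⊆ Ioo (-1.3:ℝ) 1.3 := fun x hx => ⟨by linarith [hx.1], by linarith [hx.2]⟩
  have E1 : ∀ x ∈ Ioo (-1.3:ℝ) 1.3, HasDerivAt ξ (F1 x) x := by
    intro x hx
    have hξf : ξ = fun t : ℝ => ∑' p : ℕ, γ p ^ 2 * t ^ p := funext hξ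
    rw [hξf]
    exact aux_key (fun p => γ p ^ 2) hc0 hx
  have E2 : ∀ x ∈ Ioo (-1.3:ℝ) 1.3, HasDerivAt F1 (F2 x) x := by
    intro x hx
    have hk := aux_key C1 hc1 hx
    have : (∑' p : ℕ, ((p:ℝ) + 1) * C1 (p + 1) * x ^ p) = F2 x := by
      rw [hF2def]
      exact tsum_congr fun p => by rw [hC1def, hC2def]; push_cast; ring
    rw [hF1def]; rw [this] at hk; exact hk
  have E3 : ∀ x ∈ Ioo (-1.3:ℝ) 1.3, HasDerivAt F2 (F3 x) x := by
    intro x hx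
    have hk := aux_key C2 hc2 hx
    have : (∑' p : ℕ, ((p:ℝ) + 1) * C2 (p + 1) * x ^ p) = F3 x := by
      rw [hF3def]
      exact tsum_congr fun p => by rw [hC2def, hC3def]; push_cast; ring
    rw [hF2def]; rw [this] at hk; exact hk
  have E4 : ∀ x ∈ Ioo (-1.3:ℝ) 1.3, ContinuousAt F3 x := by
    intro x hx
    exact (aux_key C3 hc3 hx).continuousAt
  have d1 : ∀ x ∈ Ioo (-1.3:ℝ) 1.3, deriv ξ x = F1 x := fun x hx => (E1 x hx).deriv
  have d2 : ∀ x ∈ Ioo (-1.3:ℝ) 1.3, deriv (deriv ξ) x = F2 x := by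
    intro x hx
    have hev : deriv ξ =ᶠ[nhds x] F1 := by
      filter_upwards [isOpen_Ioo.mem_nhds hx] with y hy using d1 y hy
    rw [hev.deriv_eq, (E2 x hx).deriv]
  have d3 : ∀ x ∈ Ioo (-1.3:ℝ) 1.3, deriv (deriv (deriv ξ)) x = F3 x := by
    intro x hx
    have hev : deriv (deriv ξ) =ᶠ[nhds x] F2 := by
      filter_upwards [isOpen_Ioo.mem_nhds hx] with y hy using d2 y hy
    rw [hev.deriv_eq, (E3 x hx).deriv]
  -- positivity and monotonicity
  have hC2nn : ∀ p : ℕ, 0 ≤ C2 p := fun p => by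
    rw [hC2def]; positivity
  have hsumC2 : ∀ x : ℝ, |x| ≤ 1.3 → Summable fun p : ℕ => C2 p * x ^ p :=
    fun x hx => aux_ptSummable C2 hc2 hx
  have habs : ∀ x : ℝ, x ∈ Icc (0:ℝ) 1 → |x| ≤ 1.3 := fun x hx => by
    rw [abs_le]; constructor <;> [linarith [hx.1]; linarith [hx.2]]
  have hF2mono : ∀ x y : ℝ, x ∈ Icc (0:ℝ) 1 → y ∈ Icc (0:ℝ) 1 → x ≤ y → F2 x ≤ F2 y := by
    intro x y hx hy hxy
    rw [hF2def]
    exact Summable.tsum_le_tsum (fun p => mul_le_mul_of_nonneg_left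
      (pow_le_pow_left₀ hx.1 hxy p) (hC2nn p)) (hsumC2 x (habs x hx)) (hsumC2 y (habs y hy))
  have hF1_1nn : 0 ≤ F1 1 := by
    rw [hF1def]
    refine tsum_nonneg fun p => ?_
    rw [hC1def]; positivity
  have h1mem : (1:ℝ) ∈ Ioo (-1.3:ℝ) 1.3 := by norm_num
  have hF2_1pos : 0 < F2 1 := by
    have h1 := hlow
    rw [d1 1 h1mem, d2 1 h1mem] at h1
    nlinarith [sq_nonneg h, hF1_1nn]
  have hexist : ∃ p : ℕ, 0 < C2 p := by
    by_contra hcon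
    push_neg at hcon
    have hz : ∀ p : ℕ, C2 p = 0 := fun p => le_antisymm (hcon p) (hC2nn p)
    have : F2 1 = 0 := by
      have hzz : F2 1 = ∑' p : ℕ, C2 p * (1:ℝ) ^ p := rfl
      have hfn : (fun p : ℕ => C2 p * (1:ℝ) ^ p) = fun _ : ℕ => (0:ℝ) := funext fun p => by
        rw [hz p]; ring
      rw [hzz, hfn, tsum_zero]
    linarith
  have hF2pos : ∀ x : ℝ, x ∈ Ioc (0:ℝ) 1 → 0 < F2 x := by
    obtain ⟨p, hp⟩ := hexist
    intro x hx
    have hterm : C2 p * x ^ p ≤ F2 x := by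
      rw [hF2def]
      exact Summable.le_tsum (hsumC2 x (habs x ⟨hx.1.le, hx.2⟩)) p
        (fun q _ => mul_nonneg (hC2nn q) (pow_nonneg hx.1.le q))
    have : 0 < C2 p * x ^ p := mul_pos hp (pow_pos hx.1 p)
    linarith
  have hq₀lt1 : q₀ < 1 := by
    rcases lt_or_eq_of_le hq₀.2 with hlt | heq
    · exact hlt
    · exfalso; rw [heq] at hq₀eq; rw [one_mul] at hq₀eq; linarith
  have hq₀mem : q₀ ∈ Ioo (-1.3:ℝ) 1.3 := hsub01 ⟨hq₀.1, hq₀.2⟩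
  -- positivity of F2 q₀ (using concavity if q₀ = 0)
  have hF2q₀pos : 0 < F2 q₀ := by
    rcases eq_or_lt_of_le hq₀.1 with h0 | hpos
    · -- q₀ = 0
      rw [← h0]
      by_contra hnot
      push_neg at hnot
      have hF2nn0 : 0 ≤ F2 0 := by
        rw [hF2def]
        exact tsum_nonneg fun p => mul_nonneg (hC2nn p) (pow_nonneg le_rfl p)
      have h00 : F2 0 = 0 := le_antisymm hnot hF2nn0
      have hhalfmem : (1/2:ℝ) ∈ Ioc (0:ℝ) 1 := by norm_num
      have h1memIoc : (1:ℝ) ∈ Ioc (0:ℝ) 1 := by norm_num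
      set g : ℝ → ℝ := fun s => (Real.sqrt (deriv (deriv ξ) s))⁻¹ with hgdef
      have hgeq : ∀ s : ℝ, s ∈ Ioc (0:ℝ) 1 → g s = (Real.sqrt (F2 s))⁻¹ := by
        intro s hs
        rw [hgdef]
        simp only
        rw [d2 s (hsub01 ⟨hs.1.le, hs.2⟩)]
      have hghalfpos : 0 < g (1/2) := by
        rw [hgeq _ hhalfmem]
        exact inv_pos.2 (Real.sqrt_pos.2 (hF2pos _ hhalfmem))
      have hg1nn : 0 ≤ g 1 := by
        rw [hgeq _ h1memIoc]
        exact inv_nonneg.2 (Real.sqrt_nonneg _)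
      set δ : ℝ := (2 * g (1/2) + 1)⁻¹ with hδdef
      have hδpos : 0 < δ := by rw [hδdef]; positivity
      -- find a small point where F2 < δ^2
      have hcont0 : ContinuousAt F2 0 := (E3 0 (by norm_num)).continuousAt
      have hev : ∀ᶠ y in nhds (0:ℝ), F2 y < δ ^ 2 := by
        have := hcont0.tendsto
        rw [h00] at this
        exact this.eventually_lt_const (by positivity)
      obtain ⟨ε, hε, hball⟩ := Metric.eventually_nhds_iff.mp hev
      set a : ℝ := min (ε/2) (1/2) with hadef
      have hapos : 0 < a := by rw [hadef]; positivity
      have hahalf : a ≤ 1/2 := min_le_right _ _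
      have haε : dist a 0 < ε := by
        rw [Real.dist_eq, sub_zero, abs_of_pos hapos]
        calc a ≤ ε/2 := min_le_left _ _
          _ < ε := by linarith
      have hFa : F2 a < δ ^ 2 := hball haε
      have haIoc : a ∈ Ioc (0:ℝ) 1 := ⟨hapos, by linarith⟩
      have hFapos : 0 < F2 a := hF2pos a haIoc
      have hga : 2 * g (1/2) + 1 < g a := by
        rw [hgeq _ haIoc]
        have hsqrtlt : Real.sqrt (F2 a) < δ := by
          calc Real.sqrt (F2 a) < Real.sqrt (δ ^ 2) := Real.sqrt_lt_sqrt hFapos.le hFa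
            _ = δ := by rw [Real.sqrt_sq hδpos.le]
        have hsqrtpos : 0 < Real.sqrt (F2 a) := Real.sqrt_pos.2 hFapos
        have := one_div_lt_one_div_of_lt hsqrtpos hsqrtlt
        rw [one_div, one_div, hδdef, inv_inv] at this
        exact this
      -- concavity contradiction
      set t : ℝ := 1 / (2 * (1 - a)) with htdef
      have ha1 : a < 1 := by linarith
      have hane : (2:ℝ) * (1 - a) ≠ 0 := by
        have : (0:ℝ) < 1 - a := by linarith
        positivity
      have htpos : 0 < t := by
        rw [htdef]
        have : (0:ℝ) < 1 - a := by linarith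
        positivity
      have hthalf : 1/2 ≤ t := by
        rw [htdef]
        rw [div_le_div_iff₀ (by norm_num) (by linarith)]
        linarith
      have htle1 : t ≤ 1 := by
        rw [htdef]
        rw [div_le_one (by linarith)]
        linarith
      have hcomb : t * a + (1 - t) * 1 = 1/2 := by
        rw [htdef]
        field_simp [sub_ne_zero.mpr ha1.ne']
        ring
      have hcc := hconc.2 haIoc h1memIoc htpos.le (by linarith : (0:ℝ) ≤ 1 - t) (by ring)
      rw [smul_eq_mul, smul_eq_mul, smul_eq_mul, smul_eq_mul] at hcc
      rw [hcomb] at hcc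
      -- hcc : t * g a + (1 - t) * g 1 ≤ g (1/2)
      have hgann : 0 ≤ g a := by
        rw [hgeq _ haIoc]; exact inv_nonneg.2 (Real.sqrt_nonneg _)
      have h5 : (1/2) * g a ≤ t * g a := mul_le_mul_of_nonneg_right hthalf hgann
      have h6 : 0 ≤ (1 - t) * g 1 := mul_nonneg (by linarith) hg1nn
      linarith
    · exact hF2pos q₀ ⟨hpos, hq₀.2⟩
  have hF2posIcc : ∀ q : ℝ, q ∈ Icc q₀ 1 → 0 < F2 q := fun q hq =>
    lt_of_lt_of_le hF2q₀pos (hF2mono q₀ q ⟨hq₀.1, hq₀.2⟩ ⟨le_trans hq₀.1 hq.1, hq.2⟩ hq.1)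
  have hIccsub : Icc q₀ 1 ⊆ Icc (0:ℝ) 1 := fun x hx => ⟨le_trans hq₀.1 hx.1, hx.2⟩
  have hL' : L = (Real.sqrt (F2 q₀))⁻¹ := by rw [hL, d2 q₀ hq₀mem]
  have hsqrtq₀pos : 0 < Real.sqrt (F2 q₀) := Real.sqrt_pos.2 hF2q₀pos
  have hLpos : 0 < L := by rw [hL']; exact inv_pos.2 hsqrtq₀pos
  -- derivative of -1/sqrt (F2 ·)
  have hGderiv : ∀ s ∈ Icc q₀ 1, HasDerivAt (fun u => -(Real.sqrt (F2 u))⁻¹)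
      (F3 s / (2 * (F2 s) ^ ((3:ℝ)/2))) s := by
    intro s hs
    have hF2s : 0 < F2 s := hF2posIcc s hs
    have hmemIoo : s ∈ Ioo (-1.3:ℝ) 1.3 := hsub01 (hIccsub hs)
    have hsqpos : 0 < Real.sqrt (F2 s) := Real.sqrt_pos.2 hF2s
    have hsqne : Real.sqrt (F2 s) ≠ 0 := ne_of_gt hsqpos
    have h1 : HasDerivAt (fun u => Real.sqrt (F2 u)) (1 / (2 * Real.sqrt (F2 s)) * F3 s) s :=
      (Real.hasDerivAt_sqrt (ne_of_gt hF2s)).comp s (E3 s hmemIoo)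
    have h2 := (h1.inv hsqne).neg
    refine h2.congr_deriv ?_
    have h32 : (F2 s) ^ ((3:ℝ)/2) = Real.sqrt (F2 s) ^ 3 := by
      rw [show ((3:ℝ)/2) = (1/2) * ((3:ℕ):ℝ) by norm_num, Real.rpow_mul hF2s.le,
        Real.rpow_natCast, ← Real.sqrt_eq_rpow]
    have h3 : Real.sqrt (F2 s) ^ 3 = F2 s * Real.sqrt (F2 s) := by
      rw [pow_succ, Real.sq_sqrt hF2s.le]
    rw [h32, h3, Real.sq_sqrt hF2s.le, neg_div, neg_neg]
    field_simp [ne_of_gt hF2s, hsqne]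
    try ring
    try tauto
  have hcontF2 : ContinuousOn F2 (Icc (0:ℝ) 1) :=
    fun x hx => ((E3 x (hsub01 hx)).continuousAt).continuousWithinAt
  have hcontF3 : ContinuousOn F3 (Icc q₀ 1) :=
    fun x hx => (E4 x (hsub01 (hIccsub hx))).continuousWithinAt
  have hcontsqrtF2 : ContinuousOn (fun q => Real.sqrt (F2 q)) (Icc q₀ 1) :=
    Real.continuous_sqrt.comp_continuousOn (hcontF2.mono hIccsub)
  have hβcont : ContinuousOn (fun s => F3 s / (2 * (F2 s) ^ ((3:ℝ)/2))) (Icc q₀ 1) := by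
    apply ContinuousOn.div hcontF3
    · exact continuousOn_const.mul (ContinuousOn.rpow_const (hcontF2.mono hIccsub)
        (fun x hx => Or.inl (ne_of_gt (hF2posIcc x hx))))
    · intro x hx
      have hr := Real.rpow_pos_of_pos (hF2posIcc x hx) ((3:ℝ)/2)
      exact ne_of_gt (by linarith)
  have huIcc0q₀ : uIcc (0:ℝ) q₀ = Icc 0 q₀ := uIcc_of_le hq₀.1
  have huIccq₀1 : uIcc q₀ (1:ℝ) = Icc q₀ 1 := uIcc_of_le hq₀.2
  -- α vanishes on [0,q₀]
  have hIntLow : IntervalIntegrable α volume 0 q₀ := by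
    apply IntervalIntegrable.congr_ae (_root_.intervalIntegrable_const (c := (0:ℝ)))
    rw [Filter.EventuallyEq, ae_restrict_iff' measurableSet_uIoc]
    filter_upwards [aux_ae_ne q₀] with s hsne hmem
    rw [uIoc_of_le hq₀.1] at hmem
    have hslt : s < q₀ := lt_of_le_of_ne hmem.2 hsne
    rw [hα s ⟨hmem.1.le, lt_trans hslt hq₀lt1⟩, if_pos hslt]
  have hAlow : ∀ q ∈ Icc (0:ℝ) q₀, (∫ s in (0:ℝ)..q, α s) = 0 := by
    intro q hq
    rw [intervalIntegral.integral_congr_ae (g := fun _ => (0:ℝ)) ?_,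
      intervalIntegral.integral_const, smul_zero]
    filter_upwards [aux_ae_ne q₀] with s hsne hmem
    rw [uIoc_of_le hq.1] at hmem
    have hslt : s < q₀ := lt_of_le_of_ne (le_trans hmem.2 hq.2) hsne
    rw [hα s ⟨hmem.1.le, lt_trans hslt hq₀lt1⟩, if_pos hslt]
  -- α equals the smooth formula on [q₀, q]
  have hIntβ : ∀ q ∈ Icc q₀ 1,
      IntervalIntegrable (fun s => F3 s / (2 * (F2 s) ^ ((3:ℝ)/2))) volume q₀ q := by
    intro q hq
    apply ContinuousOn.intervalIntegrable
    apply hβcont.mono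
    rw [uIcc_of_le hq.1]
    exact Icc_subset_Icc le_rfl hq.2
  have hαae : ∀ q ∈ Icc q₀ 1, ∀ᵐ s : ℝ, s ∈ Set.uIoc q₀ q →
      α s = F3 s / (2 * (F2 s) ^ ((3:ℝ)/2)) := by
    intro q hq
    filter_upwards [aux_ae_ne 1] with s hsne hmem
    rw [uIoc_of_le hq.1] at hmem
    have hs1 : s < 1 := lt_of_le_of_ne (le_trans hmem.2 hq.2) hsne
    have hs0 : (0:ℝ) ≤ s := le_trans hq₀.1 hmem.1.le
    rw [hα s ⟨hs0, hs1⟩, if_neg (not_lt.2 hmem.1.le),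
      d3 s (hsub01 ⟨hs0, hs1.le⟩), d2 s (hsub01 ⟨hs0, hs1.le⟩)]
  have hIntHigh : ∀ q ∈ Icc q₀ 1, IntervalIntegrable α volume q₀ q := by
    intro q hq
    refine (hIntβ q hq).congr_ae ?_
    rw [Filter.EventuallyEq, ae_restrict_iff' measurableSet_uIoc]
    filter_upwards [hαae q hq] with s hs hmem using (hs hmem).symm
  have hAhigh : ∀ q ∈ Icc q₀ 1, (∫ s in (0:ℝ)..q, α s) = L - (Real.sqrt (F2 q))⁻¹ := by
    intro q hq
    have hsplit := intervalIntegral.integral_add_adjacent_intervals hIntLow (hIntHigh q hq)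
    have h0 : (∫ s in (0:ℝ)..q₀, α s) = 0 := hAlow q₀ ⟨hq₀.1, le_rfl⟩
    have hcongr : (∫ s in q₀..q, α s) = ∫ s in q₀..q, F3 s / (2 * (F2 s) ^ ((3:ℝ)/2)) :=
      intervalIntegral.integral_congr_ae (hαae q hq)
    have hftc : (∫ s in q₀..q, F3 s / (2 * (F2 s) ^ ((3:ℝ)/2)))
        = (-(Real.sqrt (F2 q))⁻¹) - (-(Real.sqrt (F2 q₀))⁻¹) := by
      apply intervalIntegral.integral_eq_sub_of_hasDerivAt
      · intro s hs
        rw [uIcc_of_le hq.1] at hs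
        exact hGderiv s (Icc_subset_Icc le_rfl hq.2 hs)
      · exact hIntβ q hq
    rw [← hsplit, h0, zero_add, hcongr, hftc, hL']
    ring
  have hd2Icc : ∀ q ∈ Icc (0:ℝ) 1, deriv (deriv ξ) q = F2 q := fun q hq => d2 q (hsub01 hq)
  -- RHS integral
  have hRHS : (∫ q in q₀..1, Real.sqrt (deriv (deriv ξ) q)) = ∫ q in q₀..1, Real.sqrt (F2 q) := by
    apply intervalIntegral.integral_congr
    intro q hq
    rw [huIccq₀1] at hq
    show Real.sqrt (deriv (deriv ξ) q) = Real.sqrt (F2 q)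
    rw [hd2Icc q (hIccsub hq)]
  have hJint : IntervalIntegrable (fun q => Real.sqrt (F2 q)) volume q₀ 1 := by
    apply ContinuousOn.intervalIntegrable
    rw [huIccq₀1]; exact hcontsqrtF2
  have hLF2int : IntervalIntegrable (fun q => L * F2 q) volume q₀ 1 := by
    apply ContinuousOn.intervalIntegrable
    rw [huIccq₀1]; exact continuousOn_const.mul (hcontF2.mono hIccsub)
  have hF2int : IntervalIntegrable F2 volume q₀ 1 := by
    apply ContinuousOn.intervalIntegrable
    rw [huIccq₀1]; exact hcontF2.mono hIccsub
  have hFTC2 : (∫ q in q₀..1, F2 q) = F1 1 - F1 q₀ := by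
    apply intervalIntegral.integral_eq_sub_of_hasDerivAt
    · intro s hs; rw [huIccq₀1] at hs; exact E2 s (hsub01 (hIccsub hs))
    · exact hF2int
  have hid : ∀ s ∈ Icc q₀ 1, F2 s * (L - (Real.sqrt (F2 s))⁻¹) = L * F2 s - Real.sqrt (F2 s) := by
    intro s hs
    have hpos := hF2posIcc s hs
    have hsqne : Real.sqrt (F2 s) ≠ 0 := ne_of_gt (Real.sqrt_pos.2 hpos)
    have hms : Real.sqrt (F2 s) * Real.sqrt (F2 s) = F2 s := Real.mul_self_sqrt hpos.le
    calc F2 s * (L - (Real.sqrt (F2 s))⁻¹)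
        = L * F2 s - F2 s * (Real.sqrt (F2 s))⁻¹ := by ring
      _ = L * F2 s - Real.sqrt (F2 s) := by
          rw [inv_eq_one_div, mul_one_div, Real.div_sqrt]
  -- the middle integral
  have hS : (∫ q in (0:ℝ)..1, deriv (deriv ξ) q * ∫ s in (0:ℝ)..q, α s)
      = L * (F1 1 - F1 q₀) - ∫ q in q₀..1, Real.sqrt (F2 q) := by
    have i1 : IntervalIntegrable (fun q => deriv (deriv ξ) q * ∫ s in (0:ℝ)..q, α s) volume 0 q₀ := by
      apply IntervalIntegrable.congr_ae (_root_.intervalIntegrable_const (c := (0:ℝ)))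
      rw [Filter.EventuallyEq, ae_restrict_iff' measurableSet_uIoc]
      refine Filter.Eventually.of_forall fun s hmem => ?_
      rw [uIoc_of_le hq₀.1] at hmem
      rw [hAlow s ⟨hmem.1.le, hmem.2⟩, mul_zero]
    have i2 : IntervalIntegrable (fun q => deriv (deriv ξ) q * ∫ s in (0:ℝ)..q, α s) volume q₀ 1 := by
      refine IntervalIntegrable.congr_ae (hLF2int.sub hJint) ?_
      rw [Filter.EventuallyEq, ae_restrict_iff' measurableSet_uIoc]
      refine Filter.Eventually.of_forall fun s hmem => ?_
      rw [uIoc_of_le hq₀.2] at hmem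
      have hsmem : s ∈ Icc q₀ 1 := ⟨hmem.1.le, hmem.2⟩
      have hv : deriv (deriv ξ) s * (∫ u in (0:ℝ)..s, α u) = L * F2 s - Real.sqrt (F2 s) := by
        rw [hd2Icc s (hIccsub hsmem), hAhigh s hsmem, hid s hsmem]
      simpa using hv.symm
    have e1 : (∫ q in (0:ℝ)..q₀, deriv (deriv ξ) q * ∫ s in (0:ℝ)..q, α s) = 0 := by
      rw [intervalIntegral.integral_congr (g := fun _ => (0:ℝ)) ?_,
        intervalIntegral.integral_const, smul_zero]
      intro q hq
      rw [huIcc0q₀] at hq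
      show deriv (deriv ξ) q * (∫ s in (0:ℝ)..q, α s) = (0:ℝ)
      rw [hAlow q hq, mul_zero]
    have e2 : (∫ q in q₀..1, deriv (deriv ξ) q * ∫ s in (0:ℝ)..q, α s)
        = ∫ q in q₀..1, (L * F2 q - Real.sqrt (F2 q)) := by
      apply intervalIntegral.integral_congr
      intro q hq
      rw [huIccq₀1] at hq
      show deriv (deriv ξ) q * (∫ s in (0:ℝ)..q, α s) = L * F2 q - Real.sqrt (F2 q)
      rw [hd2Icc q (hIccsub hq), hAhigh q hq, hid q hq]
    have hsplit := intervalIntegral.integral_add_adjacent_intervals i1 i2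
    rw [← hsplit, e1, zero_add, e2, intervalIntegral.integral_sub hLF2int hJint,
      intervalIntegral.integral_const_mul, hFTC2]
  -- the last integral
  have hT : (∫ q in (0:ℝ)..1, 1 / (L - ∫ s in (0:ℝ)..q, α s))
      = q₀ * Real.sqrt (F2 q₀) + ∫ q in q₀..1, Real.sqrt (F2 q) := by
    have hval1 : ∀ q ∈ Icc (0:ℝ) q₀, 1 / (L - ∫ s in (0:ℝ)..q, α s) = Real.sqrt (F2 q₀) := by
      intro q hq
      rw [hAlow q hq, sub_zero, hL', one_div, inv_inv]
    have hval2 : ∀ q ∈ Icc q₀ 1, 1 / (L - ∫ s in (0:ℝ)..q, α s) = Real.sqrt (F2 q) := by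
      intro q hq
      rw [hAhigh q hq, sub_sub_cancel, one_div, inv_inv]
    have i1 : IntervalIntegrable (fun q => 1 / (L - ∫ s in (0:ℝ)..q, α s)) volume 0 q₀ := by
      apply IntervalIntegrable.congr_ae (_root_.intervalIntegrable_const (c := Real.sqrt (F2 q₀)))
      rw [Filter.EventuallyEq, ae_restrict_iff' measurableSet_uIoc]
      refine Filter.Eventually.of_forall fun s hmem => ?_
      rw [uIoc_of_le hq₀.1] at hmem
      exact (hval1 s ⟨hmem.1.le, hmem.2⟩).symm
    have i2 : IntervalIntegrable (fun q => 1 / (L - ∫ s in (0:ℝ)..q, α s)) volume q₀ 1 := by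
      apply IntervalIntegrable.congr_ae hJint
      rw [Filter.EventuallyEq, ae_restrict_iff' measurableSet_uIoc]
      refine Filter.Eventually.of_forall fun s hmem => ?_
      rw [uIoc_of_le hq₀.2] at hmem
      exact (hval2 s ⟨hmem.1.le, hmem.2⟩).symm
    have e1 : (∫ q in (0:ℝ)..q₀, 1 / (L - ∫ s in (0:ℝ)..q, α s)) = q₀ * Real.sqrt (F2 q₀) := by
      rw [intervalIntegral.integral_congr (g := fun _ => Real.sqrt (F2 q₀))
        (fun q hq => by rw [huIcc0q₀] at hq; exact hval1 q hq),
        intervalIntegral.integral_const, sub_zero, smul_eq_mul]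
    have e2 : (∫ q in q₀..1, 1 / (L - ∫ s in (0:ℝ)..q, α s)) = ∫ q in q₀..1, Real.sqrt (F2 q) :=
      intervalIntegral.integral_congr
        (fun q hq => by rw [huIccq₀1] at hq; exact hval2 q hq)
    have hsplit := intervalIntegral.integral_add_adjacent_intervals i1 i2
    rw [← hsplit, e1, e2]
  -- final algebra
  have hkey : (h ^ 2 + F1 q₀) * L = q₀ * Real.sqrt (F2 q₀) := by
    have heq := hq₀eq
    rw [d1 q₀ hq₀mem, d2 q₀ hq₀mem] at heq
    have hms : Real.sqrt (F2 q₀) * Real.sqrt (F2 q₀) = F2 q₀ := Real.mul_self_sqrt hF2q₀pos.le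
    have hsqne : Real.sqrt (F2 q₀) ≠ 0 := ne_of_gt hsqrtq₀pos
    have hval : (h ^ 2 + F1 q₀) = q₀ * F2 q₀ := by linarith
    have hdiv : F2 q₀ * (Real.sqrt (F2 q₀))⁻¹ = Real.sqrt (F2 q₀) := by
      rw [inv_eq_one_div, mul_one_div, Real.div_sqrt]
    rw [hL', hval, mul_assoc, hdiv]
  rw [d1 1 h1mem, d2 q₀ hq₀mem, hS, hT, hRHS]
  linear_combination (1/2 : ℝ) * hkey
end

section
/- Let ξ be increasing and convex on [0,1] with ξ' > 0 on (0,1]. Suppose x : [0,1] → [0,1] is nondecreasing with ∫₀¹ ξ'(s)·x(s) ds ≤ C. Then ∫₀¹ x(s) ds ≤ C/(ξ(1)−ξ(1/2)) + C/ξ'(1/2). -/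
theorem stmt_15 (ξ : ℝ → ℝ) (C : ℝ)
    (hmono : MonotoneOn ξ (Set.Icc 0 1))
    (hconv : ConvexOn ℝ (Set.Icc 0 1) ξ)
    (hdiff : ∀ s ∈ Set.Icc (0:ℝ) 1, DifferentiableAt ℝ ξ s)
    (hderiv : ∀ s ∈ Set.Ioc (0:ℝ) 1, 0 < deriv ξ s)
    (x : ℝ → ℝ) (hxmono : MonotoneOn x (Set.Icc 0 1))
    (hxrange : ∀ s ∈ Set.Icc (0:ℝ) 1, x s ∈ Set.Icc (0:ℝ) 1)
    (hint : (∫ s in (0:ℝ)..1, deriv ξ s * x s) ≤ C) :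
    (∫ s in (0:ℝ)..1, x s) ≤ C / (ξ 1 - ξ (1 / 2)) + C / deriv ξ (1 / 2) := by
  have hmem0 : (0:ℝ) ∈ Set.Icc (0:ℝ) 1 := by norm_num
  have hmemh : (1/2:ℝ) ∈ Set.Icc (0:ℝ) 1 := by norm_num
  have hmem1 : (1:ℝ) ∈ Set.Icc (0:ℝ) 1 := by norm_num
  have hsub : Set.Icc (1/2:ℝ) 1 ⊆ Set.Icc (0:ℝ) 1 := Set.Icc_subset_Icc (by norm_num) le_rfl
  have hsub0 : Set.Icc (0:ℝ) (1/2) ⊆ Set.Icc (0:ℝ) 1 := Set.Icc_subset_Icc le_rfl (by norm_num)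
  have hDmono : MonotoneOn (deriv ξ) (Set.Icc 0 1) := hconv.monotoneOn_deriv hdiff
  -- deriv ξ 0 ≥ 0
  have hD0 : 0 ≤ deriv ξ 0 := by
    have hd : HasDerivAt ξ (deriv ξ 0) 0 := (hdiff 0 hmem0).hasDerivAt
    have ht : Filter.Tendsto (slope ξ 0) (nhdsWithin 0 (Set.Ioi 0)) (nhds (deriv ξ 0)) :=
      (hasDerivAt_iff_tendsto_slope.mp hd).mono_left
        (nhdsWithin_mono _ (fun t ht => ne_of_gt ht))
    refine ge_of_tendsto ht ?_
    filter_upwards [Ioo_mem_nhdsGT_of_mem (Set.mem_Ico.mpr ⟨le_rfl, one_pos⟩)] with t ht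
    have h0t : (0:ℝ) < t := ht.1
    have hxi : ξ 0 ≤ ξ t := hmono hmem0 ⟨h0t.le, ht.2.le⟩ h0t.le
    have hs : slope ξ 0 t = (ξ t - ξ 0) / t := by
      rw [slope_def_field, sub_zero]
    rw [hs]
    exact div_nonneg (sub_nonneg.mpr hxi) h0t.le
  have hDnonneg : ∀ s ∈ Set.Icc (0:ℝ) 1, 0 ≤ deriv ξ s :=
    fun s hs => hD0.trans (hDmono hmem0 hs hs.1)
  have hxnonneg : ∀ s ∈ Set.Icc (0:ℝ) 1, 0 ≤ x s := fun s hs => (hxrange s hs).1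
  -- integrabilities
  have hprodmono : MonotoneOn (fun s => deriv ξ s * x s) (Set.Icc 0 1) := by
    intro a ha b hb hab
    exact mul_le_mul (hDmono ha hb hab) (hxmono ha hb hab) (hxnonneg a ha) (hDnonneg b hb)
  have hiDx1 : IntervalIntegrable (fun s => deriv ξ s * x s) MeasureTheory.volume 0 (1/2) := by
    refine (hprodmono.mono ?_).intervalIntegrable
    rw [Set.uIcc_of_le (by norm_num : (0:ℝ) ≤ 1/2)]; exact hsub0
  have hiDx2 : IntervalIntegrable (fun s => deriv ξ s * x s) MeasureTheory.volume (1/2) 1 := by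
    refine (hprodmono.mono ?_).intervalIntegrable
    rw [Set.uIcc_of_le (by norm_num : (1/2:ℝ) ≤ 1)]; exact hsub
  have hiD2 : IntervalIntegrable (deriv ξ) MeasureTheory.volume (1/2) 1 := by
    refine (hDmono.mono ?_).intervalIntegrable
    rw [Set.uIcc_of_le (by norm_num : (1/2:ℝ) ≤ 1)]; exact hsub
  have hix1 : IntervalIntegrable x MeasureTheory.volume 0 (1/2) := by
    refine (hxmono.mono ?_).intervalIntegrable
    rw [Set.uIcc_of_le (by norm_num : (0:ℝ) ≤ 1/2)]; exact hsub0
  have hix2 : IntervalIntegrable x MeasureTheory.volume (1/2) 1 := by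
    refine (hxmono.mono ?_).intervalIntegrable
    rw [Set.uIcc_of_le (by norm_num : (1/2:ℝ) ≤ 1)]; exact hsub
  -- split hint
  have hsplit : (∫ s in (0:ℝ)..(1/2), deriv ξ s * x s)
      + (∫ s in (1/2:ℝ)..1, deriv ξ s * x s) = ∫ s in (0:ℝ)..1, deriv ξ s * x s :=
    intervalIntegral.integral_add_adjacent_intervals hiDx1 hiDx2
  have hI1 : 0 ≤ ∫ s in (0:ℝ)..(1/2), deriv ξ s * x s := by
    refine intervalIntegral.integral_nonneg (by norm_num) (fun u hu => ?_)
    exact mul_nonneg (hDnonneg u (hsub0 hu)) (hxnonneg u (hsub0 hu))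
  have hI2C : (∫ s in (1/2:ℝ)..1, deriv ξ s * x s) ≤ C := by linarith
  -- ξ (1/2) < ξ 1
  have hcont : ContinuousOn ξ (Set.Icc (1/2:ℝ) 1) :=
    fun s hs => ((hdiff s (hsub hs)).continuousAt).continuousWithinAt
  have hstrict : StrictMonoOn ξ (Set.Icc (1/2:ℝ) 1) := by
    refine strictMonoOn_of_deriv_pos (convex_Icc _ _) hcont (fun s hs => ?_)
    rw [interior_Icc] at hs
    exact hderiv s ⟨lt_trans (by norm_num) hs.1, hs.2.le⟩
  have hxi : ξ (1/2) < ξ 1 := hstrict (Set.left_mem_Icc.mpr (by norm_num))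
    (Set.right_mem_Icc.mpr (by norm_num)) (by norm_num)
  have hxipos : 0 < ξ 1 - ξ (1/2) := sub_pos.mpr hxi
  -- FTC on [1/2, 1]
  have hftc : (∫ s in (1/2:ℝ)..1, deriv ξ s) = ξ 1 - ξ (1/2) := by
    refine intervalIntegral.integral_deriv_eq_sub (fun s hs => hdiff s ?_) hiD2
    rw [Set.uIcc_of_le (by norm_num : (1/2:ℝ) ≤ 1)] at hs
    exact hsub hs
  -- key bound: x(1/2) * (ξ 1 - ξ(1/2)) ≤ ∫_{1/2}^1 D x
  have hkey : x (1/2) * (ξ 1 - ξ (1/2)) ≤ ∫ s in (1/2:ℝ)..1, deriv ξ s * x s := by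
    have h1 : (∫ s in (1/2:ℝ)..1, deriv ξ s * x (1/2))
        ≤ ∫ s in (1/2:ℝ)..1, deriv ξ s * x s := by
      refine intervalIntegral.integral_mono_on (by norm_num)
        (hiD2.mul_const _) hiDx2 (fun s hs => ?_)
      exact mul_le_mul_of_nonneg_left (hxmono hmemh (hsub hs) hs.1) (hDnonneg s (hsub hs))
    have h2 : (∫ s in (1/2:ℝ)..1, deriv ξ s * x (1/2)) = (ξ 1 - ξ (1/2)) * x (1/2) := by
      rw [intervalIntegral.integral_mul_const, hftc]
    linarith [h1, h2.symm ▸ h1]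
  have hxh : x (1/2) ≤ C / (ξ 1 - ξ (1/2)) := by
    rw [le_div_iff₀ hxipos]
    linarith
  have hxhnn : 0 ≤ x (1/2) := hxnonneg _ hmemh
  -- first piece
  have hfirst : (∫ s in (0:ℝ)..(1/2), x s) ≤ C / (ξ 1 - ξ (1/2)) := by
    have h1 : (∫ s in (0:ℝ)..(1/2), x s) ≤ ∫ _ in (0:ℝ)..(1/2), x (1/2) := by
      refine intervalIntegral.integral_mono_on (by norm_num) hix1
        intervalIntegrable_const (fun s hs => hxmono (hsub0 hs) hmemh hs.2)
    have h2 : (∫ _ in (0:ℝ)..(1/2), x (1/2)) = (1/2) * x (1/2) := by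
      rw [intervalIntegral.integral_const, smul_eq_mul]; norm_num
    calc (∫ s in (0:ℝ)..(1/2), x s) ≤ (1/2) * x (1/2) := by rw [← h2]; exact h1
      _ ≤ x (1/2) := by linarith
      _ ≤ C / (ξ 1 - ξ (1/2)) := hxh
  -- second piece
  have hDh : 0 < deriv ξ (1/2) := hderiv _ (by norm_num)
  have hsecond : (∫ s in (1/2:ℝ)..1, x s) ≤ C / deriv ξ (1/2) := by
    have h1 : (∫ s in (1/2:ℝ)..1, x s)
        ≤ ∫ s in (1/2:ℝ)..1, deriv ξ s * x s / deriv ξ (1/2) := by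
      refine intervalIntegral.integral_mono_on (by norm_num) hix2
        (hiDx2.div_const _) (fun s hs => ?_)
      rw [le_div_iff₀ hDh, mul_comm]
      exact mul_le_mul_of_nonneg_right (hDmono hmemh (hsub hs) hs.1) (hxnonneg s (hsub hs))
    have h2 : (∫ s in (1/2:ℝ)..1, deriv ξ s * x s / deriv ξ (1/2))
        = (∫ s in (1/2:ℝ)..1, deriv ξ s * x s) / deriv ξ (1/2) :=
      intervalIntegral.integral_div _ _
    rw [h2] at h1
    exact h1.trans ((div_le_div_iff_of_pos_right hDh).mpr hI2C)
  have hxsplit : (∫ s in (0:ℝ)..(1/2), x s) + (∫ s in (1/2:ℝ)..1, x s)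
      = ∫ s in (0:ℝ)..1, x s :=
    intervalIntegral.integral_add_adjacent_intervals hix1 hix2
  linarith
end
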